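/- arXiv:math/0307093 — 13 statements merged into one kernel-verified Lean document; each statement's English description precedes it below -/
import Mathlib

section
/- For n ≥ 1, p > 0, x ∈ ℝⁿ, λ > 0, the kernel k(x,λ;ξ,z) = (|ξ-x|/λ)^p |ξ^{x,λ}-z|^p - |ξ-z|^p is strictly positive whenever |ξ-x| > λ and |z-x| > λ, where ξ^{x,λ} = x + λ²(ξ-x)/|ξ-x|². -/
theorem kernel_k_pos (n : ℕ) (hn : 1 ≤ n) (p : ℝ) (hp : 0 < p)
    (x ξ z : EuclideanSpace ℝ (Fin n)) (lam : ℝ) (hlam : 0 < lam)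
    (hξ : lam < ‖ξ - x‖) (hz : lam < ‖z - x‖) :
    0 < (‖ξ - x‖ / lam) ^ p *
        ‖(x + (lam ^ 2 / ‖ξ - x‖ ^ 2) • (ξ - x)) - z‖ ^ p - ‖ξ - z‖ ^ p := by
  set u := ξ - x with hu
  set w := z - x with hw
  have hr : (0:ℝ) < ‖u‖ := lt_trans hlam hξ
  set c : ℝ := lam ^ 2 / ‖u‖ ^ 2 with hc
  have hcpos : 0 < c := by positivity
  have hrew : x + c • u - z = c • u - w := by
    simp [hw]; abel
  have e1 : ‖c • u - w‖ ^ 2 = c ^ 2 * ‖u‖ ^ 2 - 2 * c * inner ℝ u w + ‖w‖ ^ 2 := by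
    rw [norm_sub_sq_real, norm_smul, real_inner_smul_left,
      Real.norm_eq_abs, abs_of_pos hcpos]
    ring
  have e2 : ‖ξ - z‖ ^ 2 = ‖u‖ ^ 2 - 2 * inner ℝ u w + ‖w‖ ^ 2 := by
    have h : ξ - z = u - w := by simp [hu, hw]
    rw [h, norm_sub_sq_real]
  set A : ℝ := ‖u‖ / lam with hA
  set B : ℝ := ‖c • u - w‖ with hB
  have hABnn : 0 ≤ A * B := by positivity
  have hsq : ‖ξ - z‖ ^ 2 < (A * B) ^ 2 := by
    have key : (A * B) ^ 2 - ‖ξ - z‖ ^ 2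
        = (‖u‖ ^ 2 - lam ^ 2) * (‖w‖ ^ 2 - lam ^ 2) / lam ^ 2 := by
      have : (A * B) ^ 2 = A ^ 2 * B ^ 2 := by ring
      rw [this, hB, e1, e2, hA, hc]
      field_simp
      ring
    have h1 : 0 < ‖u‖ ^ 2 - lam ^ 2 := by nlinarith
    have h2 : 0 < ‖w‖ ^ 2 - lam ^ 2 := by nlinarith
    have h3 : 0 < (‖u‖ ^ 2 - lam ^ 2) * (‖w‖ ^ 2 - lam ^ 2) / lam ^ 2 :=
      div_pos (mul_pos h1 h2) (by positivity)
    linarith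
  have hlt : ‖ξ - z‖ < A * B := lt_of_pow_lt_pow_left₀ 2 hABnn hsq
  have hrp : ‖ξ - z‖ ^ p < (A * B) ^ p :=
    Real.rpow_lt_rpow (norm_nonneg _) hlt hp
  rw [Real.mul_rpow (by positivity) (norm_nonneg _)] at hrp
  rw [hrew]
  linarith
end

section
/- Let n ≥ 1, 0 < α < n, and let v : ℝⁿ → [0,∞) be measurable. For x ∈ ℝⁿ, λ > 0, define v_{x,λ}(ξ) = (λ/|ξ-x|)^{n-α} v(ξ^{x,λ}). Then for all ξ ≠ x, (λ/|ξ-x|)^{n-α} ∫_{|y-x| ≥ λ} v(y)^{(n+α)/(n-α)} |ξ^{x,λ} - y|^{α-n} dy = ∫_{|z-x| ≤ λ} v_{x,λ}(z)^{(n+α)/(n-α)} |ξ - z|^{α-n} dz. -/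
open MeasureTheory
open scoped ENNReal

theorem inversion_integral_identity (n : ℕ) (hn : 1 ≤ n) (α : ℝ) (hα0 : 0 < α)
    (hαn : α < n) (v : EuclideanSpace ℝ (Fin n) → ℝ) (hv : Measurable v)
    (hv0 : ∀ y, 0 ≤ v y) (x : EuclideanSpace ℝ (Fin n)) (lam : ℝ) (hlam : 0 < lam)
    (ξ : EuclideanSpace ℝ (Fin n)) (hξ : ξ ≠ x) :
    ENNReal.ofReal ((lam / ‖ξ - x‖) ^ ((n : ℝ) - α)) *
      ∫⁻ y in {y : EuclideanSpace ℝ (Fin n) | lam ≤ ‖y - x‖},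
        ENNReal.ofReal (v y ^ (((n : ℝ) + α) / ((n : ℝ) - α)) *
          ‖(x + (lam ^ 2 / ‖ξ - x‖ ^ 2) • (ξ - x)) - y‖ ^ (α - (n : ℝ))) =
    ∫⁻ z in {z : EuclideanSpace ℝ (Fin n) | ‖z - x‖ ≤ lam},
      ENNReal.ofReal
        (((lam / ‖z - x‖) ^ ((n : ℝ) - α) *
            v (x + (lam ^ 2 / ‖z - x‖ ^ 2) • (z - x))) ^ (((n : ℝ) + α) / ((n : ℝ) - α)) *
          ‖ξ - z‖ ^ (α - (n : ℝ))) := by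
  classical
  haveI : Nonempty (Fin n) := ⟨⟨0, hn⟩⟩
  have hnα : (0:ℝ) < (n:ℝ) - α := by linarith
  have hlam' : lam ≠ 0 := hlam.ne'
  set p : ℝ := ((n:ℝ) + α) / ((n:ℝ) - α) with hp
  set f : EuclideanSpace ℝ (Fin n) → EuclideanSpace ℝ (Fin n) :=
    EuclideanGeometry.inversion x lam with hfdef
  have hfeq : ∀ w : EuclideanSpace ℝ (Fin n),
      x + (lam ^ 2 / ‖w - x‖ ^ 2) • (w - x) = f w := by
    intro w
    rw [hfdef, EuclideanGeometry.inversion, dist_eq_norm, div_pow, vsub_eq_sub, vadd_eq_add,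
      add_comm]
  set s : Set (EuclideanSpace ℝ (Fin n)) := Metric.closedBall x lam \ {x} with hs
  have hsm : MeasurableSet s := measurableSet_closedBall.diff (measurableSet_singleton x)
  have hmem : ∀ z ∈ s, 0 < ‖z - x‖ ∧ ‖z - x‖ ≤ lam := by
    intro z hz
    constructor
    · rw [norm_pos_iff, sub_ne_zero]
      exact fun h => hz.2 (by simp [h])
    · simpa [Metric.mem_closedBall, dist_eq_norm] using hz.1
  have himg : f '' s = {y : EuclideanSpace ℝ (Fin n) | lam ≤ ‖y - x‖} := by
    ext y
    constructor
    · rintro ⟨z, hz, rfl⟩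
      obtain ⟨h0, h1⟩ := hmem z hz
      have hd : dist (f z) x = lam ^ 2 / dist z x :=
        EuclideanGeometry.dist_inversion_center x z lam
      rw [Set.mem_setOf_eq, ← dist_eq_norm, hd, dist_eq_norm, le_div_iff₀ h0]
      nlinarith
    · intro hy
      have hy' : lam ≤ ‖y - x‖ := hy
      have hy0 : 0 < ‖y - x‖ := lt_of_lt_of_le hlam hy'
      have hyx : y ≠ x := by
        intro h; rw [h, sub_self, norm_zero] at hy0; exact lt_irrefl 0 hy0
      refine ⟨f y, ⟨?_, ?_⟩, EuclideanGeometry.inversion_inversion x hlam' y⟩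
      · rw [Metric.mem_closedBall, EuclideanGeometry.dist_inversion_center,
          div_le_iff₀ (by rw [dist_eq_norm]; exact hy0), dist_eq_norm]
        nlinarith
      · simp only [Set.mem_singleton_iff]
        exact fun h => hyx ((EuclideanGeometry.inversion_eq_center hlam').1 h)
  set F' : EuclideanSpace ℝ (Fin n) → (EuclideanSpace ℝ (Fin n) →L[ℝ] EuclideanSpace ℝ (Fin n)) :=
    fun z => ((lam / dist z x) ^ 2) • (Submodule.reflection (ℝ ∙ (z - x))ᗮ :
      EuclideanSpace ℝ (Fin n) →L[ℝ] EuclideanSpace ℝ (Fin n)) with hF'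
  have hder : ∀ z ∈ s, HasFDerivWithinAt f (F' z) s z := by
    intro z hz
    have hzx : z ≠ x := by
      intro h
      exact absurd (by simp [h] : ‖z - x‖ = 0) (ne_of_gt (hmem z hz).1)
    exact (EuclideanGeometry.hasFDerivAt_inversion hzx).hasFDerivWithinAt
  have hinj : Set.InjOn f s := (EuclideanGeometry.inversion_injective x hlam').injOn
  have hdet : ∀ z, |(F' z).det| = (lam / ‖z - x‖) ^ (2 * n) := by
    intro z
    rw [hF', ContinuousLinearMap.det, ContinuousLinearMap.coe_smul, LinearMap.det_smul]
    have h1 : (((Submodule.reflection (ℝ ∙ (z - x))ᗮ : EuclideanSpace ℝ (Fin n) →L[ℝ]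
        EuclideanSpace ℝ (Fin n))) : EuclideanSpace ℝ (Fin n) →ₗ[ℝ] EuclideanSpace ℝ (Fin n))
        = (Submodule.reflection (ℝ ∙ (z - x))ᗮ).toLinearEquiv.toLinearMap := rfl
    rw [h1, Submodule.det_reflection, abs_mul, abs_pow, abs_pow, abs_pow, abs_neg, abs_one, one_pow,
      mul_one, abs_of_nonneg (by positivity : (0:ℝ) ≤ lam / dist z x), ← pow_mul,
      dist_eq_norm, finrank_euclideanSpace, Fintype.card_fin]
  set g : EuclideanSpace ℝ (Fin n) → ℝ≥0∞ := fun y =>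
    ENNReal.ofReal (v y ^ p * ‖f ξ - y‖ ^ (α - (n:ℝ))) with hg
  have CoV := lintegral_image_eq_lintegral_abs_det_fderiv_mul volume hsm hder hinj g
  rw [himg] at CoV
  have hball : {z : EuclideanSpace ℝ (Fin n) | ‖z - x‖ ≤ lam} = Metric.closedBall x lam := by
    ext z; simp [Metric.mem_closedBall, dist_eq_norm]
  have hae : s =ᵐ[volume] Metric.closedBall x lam :=
    (MeasureTheory.diff_ae_eq_self (t := {x})).2
      (measure_mono_null Set.inter_subset_right (measure_singleton x))
  simp only [hfeq]
  rw [hball, ← setLIntegral_congr hae]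
  calc ENNReal.ofReal ((lam / ‖ξ - x‖) ^ ((n:ℝ) - α)) *
        ∫⁻ y in {y : EuclideanSpace ℝ (Fin n) | lam ≤ ‖y - x‖}, g y
      = ∫⁻ z in s, ENNReal.ofReal ((lam / ‖ξ - x‖) ^ ((n:ℝ) - α)) *
          (ENNReal.ofReal |(F' z).det| * g (f z)) := by
        rw [CoV, ← lintegral_const_mul' _ _ ENNReal.ofReal_ne_top]
    _ = ∫⁻ z in s, ENNReal.ofReal
          (((lam / ‖z - x‖) ^ ((n:ℝ) - α) * v (f z)) ^ p * ‖ξ - z‖ ^ (α - (n:ℝ))) := by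
        apply setLIntegral_congr_fun hsm
        intro z hz
        dsimp only
        obtain ⟨h0, h1⟩ := hmem z hz
        have hzx : z ≠ x := by
          intro h; rw [h, sub_self, norm_zero] at h0; exact lt_irrefl 0 h0
        have hD : 0 < ‖ξ - x‖ := by
          rw [norm_pos_iff, sub_ne_zero]; exact hξ
        set d : ℝ := ‖z - x‖ with hd
        set D : ℝ := ‖ξ - x‖ with hDdef
        set r : ℝ := ‖ξ - z‖ with hr
        have hfd : ‖f ξ - f z‖ = (lam / D) * (lam / d) * r := by
          rw [← dist_eq_norm, hfdef, EuclideanGeometry.dist_inversion_inversion hξ hzx,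
            dist_eq_norm, dist_eq_norm, dist_eq_norm, ← hd, ← hDdef, ← hr, sq,
            ← div_mul_div_comm]
        rw [hdet z, ← hd]
        simp only [hg]
        rw [hfd, ← ENNReal.ofReal_mul (by positivity),
          ← ENNReal.ofReal_mul (by positivity)]
        congr 1
        have hA : 0 ≤ v (f z) := hv0 _
        have ht : (0:ℝ) < lam / d := by positivity
        have hu : (0:ℝ) < lam / D := by positivity
        have hrn : (0:ℝ) ≤ r := norm_nonneg _
        have e1 : ((lam / D) * (lam / d) * r) ^ (α - (n:ℝ))
            = (lam / D) ^ (α - (n:ℝ)) * (lam / d) ^ (α - (n:ℝ)) * r ^ (α - (n:ℝ)) := by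
          rw [Real.mul_rpow (by positivity) hrn, Real.mul_rpow hu.le ht.le]
        have e2 : ((lam / d) ^ ((n:ℝ) - α) * v (f z)) ^ p
            = (lam / d) ^ (((n:ℝ) - α) * p) * v (f z) ^ p := by
          rw [Real.mul_rpow (Real.rpow_nonneg ht.le _) hA, ← Real.rpow_mul ht.le]
        have e3 : ((n:ℝ) - α) * p = (n:ℝ) + α := by
          rw [hp]; field_simp
        have e4 : (lam / d) ^ (2 * n) = (lam / d) ^ ((2 * n : ℕ) : ℝ) :=
          (Real.rpow_natCast _ _).symm
        have e5 : (lam / D) ^ ((n:ℝ) - α) * (lam / D) ^ (α - (n:ℝ)) = 1 := by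
          rw [← Real.rpow_add hu]; norm_num
        have e6 : (lam / d) ^ ((2 * n : ℕ) : ℝ) * (lam / d) ^ (α - (n:ℝ))
            = (lam / d) ^ (((n:ℝ) - α) * p) := by
          rw [← Real.rpow_add ht, e3]
          congr 1
          push_cast
          ring
        rw [e1, e2]
        calc (lam / D) ^ ((n:ℝ) - α) * ((lam / d) ^ (2 * n) *
              (v (f z) ^ p * ((lam / D) ^ (α - (n:ℝ)) * (lam / d) ^ (α - (n:ℝ))
                * r ^ (α - (n:ℝ)))))
            = ((lam / D) ^ ((n:ℝ) - α) * (lam / D) ^ (α - (n:ℝ))) *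
              ((lam / d) ^ ((2 * n : ℕ) : ℝ) * (lam / d) ^ (α - (n:ℝ))) *
              (v (f z) ^ p * r ^ (α - (n:ℝ))) := by rw [← e4]; ring
          _ = (lam / d) ^ (((n:ℝ) - α) * p) * v (f z) ^ p * r ^ (α - (n:ℝ)) := by
              rw [e5, e6]; ring
end

section
/- Let n ≥ 1, 0 < α < n, and let u : ℝⁿ → (0,∞) be a measurable function satisfying u(x) = ∫_{ℝⁿ} u(y)^{(n+α)/(n-α)} |x-y|^{α-n} dy for all x. Then for every x ∈ ℝⁿ and λ > 0, the conformally transformed function u_{x,λ}(ξ) = (λ/|ξ-x|)^{n-α} u(x + λ²(ξ-x)/|ξ-x|²) satisfies the same equation: u_{x,λ}(ξ) = ∫_{ℝⁿ} u_{x,λ}(z)^{(n+α)/(n-α)} |ξ-z|^{α-n} dz for all ξ ≠ x. -/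
open MeasureTheory EuclideanGeometry Module

private lemma key_alg (ν α a b d t U : ℝ) (h1 : α < ν) (ha : 0 < a) (hb : 0 < b)
    (hd : 0 < d) (hU : 0 < U) (ht : 0 ≤ t) :
    (a / d) ^ (ν - α) *
      ((a / b) ^ (2 * ν) * (U ^ ((ν + α) / (ν - α)) * (a ^ 2 / (d * b) * t) ^ (α - ν))) =
      ((a / b) ^ (ν - α) * U) ^ ((ν + α) / (ν - α)) * t ^ (α - ν) := by
  have hνα : ν - α ≠ 0 := by linarith
  rcases eq_or_lt_of_le ht with rfl | ht
  · rw [mul_zero, Real.zero_rpow (by linarith)]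
    ring
  · have had : 0 < a / d := div_pos ha hd
    have hab : 0 < a / b := div_pos ha hb
    have hX : 0 < (a / b) ^ (ν - α) * U := mul_pos (Real.rpow_pos_of_pos hab _) hU
    have hY : 0 < a ^ 2 / (d * b) * t := mul_pos (div_pos (pow_pos ha 2) (mul_pos hd hb)) ht
    have hL : 0 < (a / d) ^ (ν - α) *
        ((a / b) ^ (2 * ν) * (U ^ ((ν + α) / (ν - α)) * (a ^ 2 / (d * b) * t) ^ (α - ν))) := by
      positivity
    have hR : 0 < ((a / b) ^ (ν - α) * U) ^ ((ν + α) / (ν - α)) * t ^ (α - ν) := by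
      positivity
    rw [← Real.exp_log hL, ← Real.exp_log hR]
    congr 1
    rw [Real.log_mul (by positivity) (by positivity), Real.log_mul (by positivity) (by positivity),
      Real.log_mul (by positivity) (by positivity), Real.log_rpow had, Real.log_rpow hab,
      Real.log_rpow hU, Real.log_rpow hY,
      Real.log_mul (by positivity) (by positivity), Real.log_mul (by positivity) (by positivity),
      Real.log_rpow hX, Real.log_rpow ht, Real.log_mul (by positivity) (ne_of_gt hU),
      Real.log_rpow hab, Real.log_div (ne_of_gt ha) (ne_of_gt hd),
      Real.log_div (ne_of_gt ha) (ne_of_gt hb),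
      Real.log_div (by positivity) (by positivity), Real.log_mul (ne_of_gt hd) (ne_of_gt hb),
      Real.log_pow]
    field_simp
    ring

private lemma det_refl_smul (n : ℕ) (r : ℝ) (hr : 0 < r) (v : EuclideanSpace ℝ (Fin n))
    (hv : v ≠ 0) :
    |(r • ((Submodule.reflection (ℝ ∙ v)ᗮ) :
        EuclideanSpace ℝ (Fin n) →L[ℝ] EuclideanSpace ℝ (Fin n))).det| = r ^ n := by
  have h1 : (r • ((Submodule.reflection (ℝ ∙ v)ᗮ) :
      EuclideanSpace ℝ (Fin n) →L[ℝ] EuclideanSpace ℝ (Fin n))).det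
      = r ^ n * LinearMap.det (Submodule.reflection (ℝ ∙ v)ᗮ).toLinearMap := by
    rw [ContinuousLinearMap.det, ContinuousLinearMap.coe_smul, LinearMap.det_smul,
      finrank_euclideanSpace_fin]
    congr 1
  rw [h1, Submodule.det_reflection, Submodule.orthogonal_orthogonal,
    finrank_span_singleton hv]
  simp [abs_of_pos (pow_pos hr n)]

theorem conformal_invariance_of_solution (n : ℕ) (hn : 1 ≤ n) (α : ℝ) (hα0 : 0 < α)
    (hαn : α < n) (u : EuclideanSpace ℝ (Fin n) → ℝ) (hu : Measurable u)
    (hupos : ∀ x, 0 < u x)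
    (heq : ∀ x, u x = ∫ y, u y ^ (((n : ℝ) + α) / ((n : ℝ) - α)) * ‖x - y‖ ^ (α - (n : ℝ))) :
    ∀ x : EuclideanSpace ℝ (Fin n), ∀ lam : ℝ, 0 < lam →
      ∀ ξ, ξ ≠ x →
        (lam / ‖ξ - x‖) ^ ((n : ℝ) - α) * u (x + (lam ^ 2 / ‖ξ - x‖ ^ 2) • (ξ - x)) =
          ∫ z, ((lam / ‖z - x‖) ^ ((n : ℝ) - α) *
              u (x + (lam ^ 2 / ‖z - x‖ ^ 2) • (z - x))) ^ (((n : ℝ) + α) / ((n : ℝ) - α)) *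
            ‖ξ - z‖ ^ (α - (n : ℝ)) := by
  intro x lam hlam ξ hξ
  have hα' : α < (n : ℝ) := hαn
  have hlam' : lam ≠ 0 := ne_of_gt hlam
  haveI : Nontrivial (EuclideanSpace ℝ (Fin n)) := by
    refine ⟨0, EuclideanSpace.single ⟨0, hn⟩ 1, fun h => ?_⟩
    have := congrArg norm h
    simp [EuclideanSpace.norm_single] at this
  set f : EuclideanSpace ℝ (Fin n) → EuclideanSpace ℝ (Fin n) := EuclideanGeometry.inversion x lam with hf
  have hinv : ∀ z : EuclideanSpace ℝ (Fin n), f z = x + (lam ^ 2 / ‖z - x‖ ^ 2) • (z - x) := by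
    intro z
    simp only [hf, EuclideanGeometry.inversion_def, vsub_eq_sub, vadd_eq_add, dist_eq_norm,
      div_pow]
    exact add_comm _ _
  set s : Set (EuclideanSpace ℝ (Fin n)) := {x}ᶜ with hsdef
  have hs : MeasurableSet s := (measurableSet_singleton x).compl
  have hmem : ∀ z : EuclideanSpace ℝ (Fin n), z ≠ x → f z ≠ x := by
    intro z hz
    have : dist (f z) x = lam ^ 2 / dist z x := EuclideanGeometry.dist_inversion_center x z lam
    have hpos : 0 < dist (f z) x := by
      rw [this]
      exact div_pos (pow_pos hlam 2) (dist_pos.2 hz)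
    exact dist_pos.1 hpos
  have hff : ∀ z : EuclideanSpace ℝ (Fin n), f (f z) = z := EuclideanGeometry.inversion_inversion x hlam'
  have himg : f '' s = s := by
    apply Set.Subset.antisymm
    · rintro _ ⟨z, hz, rfl⟩
      exact hmem z hz
    · intro y hy
      exact ⟨f y, hmem y hy, hff y⟩
  have hinj : Set.InjOn f s :=
    (EuclideanGeometry.inversion_involutive x hlam').injective.injOn
  set A : EuclideanSpace ℝ (Fin n) → (EuclideanSpace ℝ (Fin n) →L[ℝ] EuclideanSpace ℝ (Fin n)) := fun z =>
    ((lam / dist z x) ^ 2) • ((Submodule.reflection (ℝ ∙ (z - x))ᗮ) : EuclideanSpace ℝ (Fin n) →L[ℝ] EuclideanSpace ℝ (Fin n)) with hA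
  have hder : ∀ z ∈ s, HasFDerivWithinAt f (A z) s z := fun z hz =>
    (EuclideanGeometry.hasFDerivAt_inversion hz).hasFDerivWithinAt
  have hdet : ∀ z : EuclideanSpace ℝ (Fin n), z ≠ x → |(A z).det| = (lam / ‖z - x‖) ^ (2 * (n : ℝ)) := by
    intro z hz
    have h1 : |(A z).det| = ((lam / dist z x) ^ 2) ^ n :=
      det_refl_smul n _ (pow_pos (div_pos hlam (dist_pos.2 hz)) 2) _ (sub_ne_zero.2 hz)
    rw [h1, ← pow_mul, ← Real.rpow_natCast, dist_eq_norm]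
    push_cast
    ring_nf
  -- the singleton has measure zero
  have hnull : (volume : Measure (EuclideanSpace ℝ (Fin n))) {x} = 0 := measure_singleton x
  have hres : (volume : Measure (EuclideanSpace ℝ (Fin n))).restrict s = volume := by
    rw [Measure.restrict_congr_set (ae_eq_univ.2 (by rwa [hsdef, compl_compl])),
      Measure.restrict_univ]
  have huniv : ∀ g : EuclideanSpace ℝ (Fin n) → ℝ, ∫ z in s, g z = ∫ z, g z := fun g => by rw [hres]
  set p : ℝ := ((n : ℝ) + α) / ((n : ℝ) - α) with hp
  set c : ℝ := (lam / ‖ξ - x‖) ^ ((n : ℝ) - α) with hc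
  have hξx : 0 < ‖ξ - x‖ := by rwa [norm_sub_pos_iff]
  have hGint : ∀ z ∈ s,
      ((lam / ‖z - x‖) ^ ((n : ℝ) - α) * u (x + (lam ^ 2 / ‖z - x‖ ^ 2) • (z - x))) ^ p *
        ‖ξ - z‖ ^ (α - (n : ℝ))
      = c * (|(A z).det| • (u (f z) ^ p * ‖f ξ - f z‖ ^ (α - (n : ℝ)))) := by
    intro z hz
    have hzx : z ≠ x := hz
    have hbz : 0 < ‖z - x‖ := by rwa [norm_sub_pos_iff]
    have hdd : ‖f ξ - f z‖ = lam ^ 2 / (‖ξ - x‖ * ‖z - x‖) * ‖ξ - z‖ := by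
      have := EuclideanGeometry.dist_inversion_inversion hξ hzx lam
      rwa [dist_eq_norm, dist_eq_norm, dist_eq_norm, dist_eq_norm] at this
    rw [← hinv z, hdet z hzx, hdd, smul_eq_mul, hc]
    exact (key_alg (n : ℝ) α lam ‖z - x‖ ‖ξ - x‖ ‖ξ - z‖ (u (f z)) hα' hlam hbz hξx
      (hupos _) (norm_nonneg _)).symm
  rw [← hinv ξ]
  calc c * u (f ξ)
      = c * ∫ y, u y ^ p * ‖f ξ - y‖ ^ (α - (n : ℝ)) := by rw [← heq (f ξ)]
    _ = c * ∫ y in s, u y ^ p * ‖f ξ - y‖ ^ (α - (n : ℝ)) := by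
        rw [huniv fun y => u y ^ p * ‖f ξ - y‖ ^ (α - (n : ℝ))]
    _ = c * ∫ y in f '' s, u y ^ p * ‖f ξ - y‖ ^ (α - (n : ℝ)) := by rw [himg]
    _ = c * ∫ z in s, |(A z).det| • (u (f z) ^ p * ‖f ξ - f z‖ ^ (α - (n : ℝ))) := by
        rw [integral_image_eq_integral_abs_det_fderiv_smul volume hs hder hinj]
    _ = ∫ z in s, c * (|(A z).det| • (u (f z) ^ p * ‖f ξ - f z‖ ^ (α - (n : ℝ)))) := by
        rw [integral_const_mul]
    _ = ∫ z in s,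
          ((lam / ‖z - x‖) ^ ((n : ℝ) - α) * u (x + (lam ^ 2 / ‖z - x‖ ^ 2) • (z - x))) ^ p *
            ‖ξ - z‖ ^ (α - (n : ℝ)) := by
        exact setIntegral_congr_fun hs fun z hz => (hGint z hz).symm
    _ = ∫ z,
          ((lam / ‖z - x‖) ^ ((n : ℝ) - α) * u (x + (lam ^ 2 / ‖z - x‖ ^ 2) • (z - x))) ^ p *
            ‖ξ - z‖ ^ (α - (n : ℝ)) := by
        exact huniv _
end

section
/- Let n ≥ 1, 0 < α < n, and let u ∈ C¹(ℝⁿ) be positive with liminf_{|x|→∞} |x|^{n-α} u(x) > 0. Then for each x ∈ ℝⁿ there exists λ₀ > 0 such that for all 0 < λ < λ₀ and all y with |y - x| ≥ λ, one has (λ/|y-x|)^{n-α} u(x + λ²(y-x)/|y-x|²) ≤ u(y). -/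
open Filter

private lemma rpow_key_ineq {β t : ℝ} (hβ : 0 < β) (ht0 : 0 < t) (ht1 : t ≤ 1) :
    β * (t ^ β * (1 - t)) ≤ 1 - t ^ β := by
  have hlog : 1 - t ≤ -Real.log t := by
    have := Real.log_le_sub_one_of_pos ht0
    linarith
  have h1 : 1 + β * (1 - t) ≤ t ^ (-β) := by
    rw [Real.rpow_def_of_pos ht0]
    have e1 : 1 + β * (1 - t) ≤ 1 + Real.log t * (-β) := by nlinarith
    have e2 := Real.add_one_le_exp (Real.log t * (-β))
    linarith
  have hpow : (0:ℝ) < t ^ β := Real.rpow_pos_of_pos ht0 β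
  have h2 : (1 + β * (1 - t)) * t ^ β ≤ t ^ (-β) * t ^ β :=
    mul_le_mul_of_nonneg_right h1 hpow.le
  rw [← Real.rpow_add ht0, neg_add_cancel, Real.rpow_zero] at h2
  nlinarith [h2]

private lemma far_bound {n : ℕ} (β : ℝ) (hβ : 0 < β)
    (u : EuclideanSpace ℝ (Fin n) → ℝ) (hu : Continuous u) (hupos : ∀ x, 0 < u x)
    (x : EuclideanSpace ℝ (Fin n)) (r₀ : ℝ) (hr₀ : 0 < r₀)
    (l R : ℝ) (hl : 0 < l)
    (hR : ∀ y : EuclideanSpace ℝ (Fin n), R ≤ ‖y‖ → l ≤ ‖y‖ ^ β * u y) :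
    ∃ ε > (0:ℝ), ∀ y : EuclideanSpace ℝ (Fin n), r₀ ≤ ‖y - x‖ → ε ≤ ‖y - x‖ ^ β * u y := by
  set R' := max R (2 * ‖x‖) with hR'def
  have h2β : (0:ℝ) < 2 ^ (β : ℝ) := Real.rpow_pos_of_pos two_pos β
  have hfar : ∀ y : EuclideanSpace ℝ (Fin n), R' < ‖y‖ →
      l / 2 ^ (β : ℝ) ≤ ‖y - x‖ ^ β * u y := by
    intro y hy
    have hyR : R ≤ ‖y‖ := le_of_lt (lt_of_le_of_lt (le_max_left _ _) hy)
    have hx2 : 2 * ‖x‖ ≤ ‖y‖ := le_of_lt (lt_of_le_of_lt (le_max_right _ _) hy)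
    have h1 : ‖y‖ / 2 ≤ ‖y - x‖ := by
      have := norm_sub_norm_le y x
      linarith
    have h2 : (‖y‖ / 2) ^ (β:ℝ) ≤ ‖y - x‖ ^ (β:ℝ) :=
      Real.rpow_le_rpow (by positivity) h1 hβ.le
    have h3 : (‖y‖ / 2) ^ (β:ℝ) = ‖y‖ ^ (β:ℝ) / 2 ^ (β:ℝ) :=
      Real.div_rpow (norm_nonneg _) (by norm_num) β
    calc l / 2 ^ (β:ℝ) ≤ (‖y‖ ^ (β:ℝ) * u y) / 2 ^ (β:ℝ) := by
          gcongr
          exact hR y hyR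
      _ = (‖y‖ / 2) ^ (β:ℝ) * u y := by rw [h3]; ring
      _ ≤ ‖y - x‖ ^ (β:ℝ) * u y := mul_le_mul_of_nonneg_right h2 (hupos y).le
  have hclosed : IsClosed {y : EuclideanSpace ℝ (Fin n) | r₀ ≤ ‖y - x‖} :=
    isClosed_le continuous_const ((continuous_id.sub continuous_const).norm)
  have hcomp : IsCompact
      (Metric.closedBall (0 : EuclideanSpace ℝ (Fin n)) R' ∩ {y | r₀ ≤ ‖y - x‖}) :=
    (isCompact_closedBall _ _).inter_right hclosed
  have hg : Continuous fun y : EuclideanSpace ℝ (Fin n) => ‖y - x‖ ^ (β:ℝ) * u y := by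
    apply Continuous.mul _ hu
    apply Continuous.rpow_const ((continuous_id.sub continuous_const).norm)
    intro y; right; exact hβ.le
  rcases Set.eq_empty_or_nonempty
      (Metric.closedBall (0 : EuclideanSpace ℝ (Fin n)) R' ∩ {y | r₀ ≤ ‖y - x‖}) with hA | hA
  · refine ⟨l / 2 ^ (β:ℝ), by positivity, fun y hy => ?_⟩
    apply hfar
    by_contra h
    push_neg at h
    exact Set.eq_empty_iff_forall_notMem.mp hA y ⟨mem_closedBall_zero_iff.mpr h, hy⟩
  · obtain ⟨z, hzA, hzmin⟩ := hcomp.exists_isMinOn hA hg.continuousOn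
    have hz0 : 0 < ‖z - x‖ ^ (β:ℝ) * u z :=
      mul_pos (Real.rpow_pos_of_pos (lt_of_lt_of_le hr₀ hzA.2) β) (hupos z)
    refine ⟨min (‖z - x‖ ^ (β:ℝ) * u z) (l / 2 ^ (β:ℝ)),
      lt_min hz0 (by positivity), fun y hy => ?_⟩
    by_cases hyR' : ‖y‖ ≤ R'
    · exact le_trans (min_le_left _ _)
        ((isMinOn_iff.mp hzmin) y ⟨mem_closedBall_zero_iff.mpr hyR', hy⟩)
    · exact le_trans (min_le_right _ _) (hfar y (not_le.mp hyR'))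

set_option maxHeartbeats 3200000 in
theorem moving_sphere_start (n : ℕ) (hn : 1 ≤ n) (α : ℝ) (hα0 : 0 < α) (hαn : α < n)
    (u : EuclideanSpace ℝ (Fin n) → ℝ) (hu : ContDiff ℝ 1 u) (hupos : ∀ x, 0 < u x)
    (hliminf : 0 < liminf (fun x : EuclideanSpace ℝ (Fin n) => ‖x‖ ^ ((n : ℝ) - α) * u x)
        (comap (fun x : EuclideanSpace ℝ (Fin n) => ‖x‖) atTop)) :
    ∀ x : EuclideanSpace ℝ (Fin n), ∃ lam₀ > (0 : ℝ),
      ∀ lam : ℝ, 0 < lam → lam < lam₀ → ∀ y, lam ≤ ‖y - x‖ →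
        (lam / ‖y - x‖) ^ ((n : ℝ) - α) * u (x + (lam ^ 2 / ‖y - x‖ ^ 2) • (y - x)) ≤ u y := by
  intro x
  set β := (n : ℝ) - α with hβdef
  have hβ : 0 < β := sub_pos.mpr hαn
  clear_value β
  -- constants on the closed unit ball around x
  have hK : IsCompact (Metric.closedBall x 1) := isCompact_closedBall x 1
  have hxK : x ∈ Metric.closedBall x 1 := Metric.mem_closedBall_self zero_le_one
  obtain ⟨zc, hzcK, hzc⟩ := hK.exists_isMinOn ⟨x, hxK⟩ hu.continuous.continuousOn
  obtain ⟨zM, hzMK, hzM⟩ := hK.exists_isMaxOn ⟨x, hxK⟩ hu.continuous.continuousOn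
  set c := u zc with hcdef
  set M := u zM with hMdef
  have hc : 0 < c := hupos zc
  have hM : 0 < M := hupos zM
  have hcle : ∀ y ∈ Metric.closedBall x 1, c ≤ u y := fun y hy => (isMinOn_iff.mp hzc) y hy
  have hMle : ∀ y ∈ Metric.closedBall x 1, u y ≤ M := fun y hy => (isMaxOn_iff.mp hzM) y hy
  clear_value c M
  -- Lipschitz constant on the ball
  have hfc : Continuous fun y : EuclideanSpace ℝ (Fin n) => ‖fderiv ℝ u y‖ :=
    (hu.continuous_fderiv one_ne_zero).norm
  obtain ⟨zL, hzLK, hzL⟩ := hK.exists_isMaxOn ⟨x, hxK⟩ hfc.continuousOn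
  set L := ‖fderiv ℝ u zL‖ with hLdef
  have hL0 : 0 ≤ L := norm_nonneg _
  have hLip : ∀ p ∈ Metric.closedBall x 1, ∀ q ∈ Metric.closedBall x 1,
      ‖u p - u q‖ ≤ L * ‖p - q‖ := by
    intro p hp q hq
    exact (convex_closedBall x 1).norm_image_sub_le_of_norm_fderiv_le
      (fun y _ => hu.differentiable one_ne_zero y)
      (fun y hy => (isMaxOn_iff.mp hzL) y hy) hq hp
  clear_value L
  set r₀ := min 1 (β * c / (2 * (L + 1))) with hr₀def
  have hr₀ : 0 < r₀ := lt_min one_pos (by positivity)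
  have hr₀1 : r₀ ≤ 1 := min_le_left _ _
  -- from the liminf hypothesis, a lower bound at infinity
  have hbound : IsBoundedUnder (· ≥ ·)
      (comap (fun x : EuclideanSpace ℝ (Fin n) => ‖x‖) atTop)
      (fun y : EuclideanSpace ℝ (Fin n) => ‖y‖ ^ β * u y) :=
    ⟨0, Filter.eventually_map.mpr (Filter.Eventually.of_forall fun y =>
      mul_nonneg (Real.rpow_nonneg (norm_nonneg _) _) (hupos y).le)⟩
  have hev := Filter.eventually_lt_of_lt_liminf (half_lt_self hliminf) hbound
  rw [Filter.eventually_comap] at hev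
  obtain ⟨R, hRev⟩ := Filter.eventually_atTop.mp hev
  set l := liminf (fun x : EuclideanSpace ℝ (Fin n) => ‖x‖ ^ β * u x)
      (comap (fun x : EuclideanSpace ℝ (Fin n) => ‖x‖) atTop) / 2 with hldef
  have hl : 0 < l := half_pos hliminf
  have hRfar : ∀ y : EuclideanSpace ℝ (Fin n), R ≤ ‖y‖ → l ≤ ‖y‖ ^ β * u y :=
    fun y hy => (hRev ‖y‖ hy y rfl).le
  obtain ⟨ε, hε, hfarb⟩ := far_bound β hβ u hu.continuous hupos x r₀ hr₀ l R hl hRfar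
  refine ⟨min r₀ ((ε / M) ^ (β⁻¹ : ℝ)),
    lt_min hr₀ (Real.rpow_pos_of_pos (div_pos hε hM) _), ?_⟩
  intro lam hlam hlamlt y hyr
  set r := ‖y - x‖ with hrdef
  have hr : 0 < r := lt_of_lt_of_le hlam hyr
  have hlamr₀ : lam < r₀ := lt_of_lt_of_le hlamlt (min_le_left _ _)
  set p := x + (lam ^ 2 / r ^ 2) • (y - x) with hpdef
  have hpx : p - x = (lam ^ 2 / r ^ 2) • (y - x) := by rw [hpdef, add_sub_cancel_left]
  have hpxnorm : ‖p - x‖ = lam ^ 2 / r := by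
    rw [hpx, norm_smul, Real.norm_eq_abs, abs_of_nonneg (by positivity), ← hrdef]
    field_simp
  have hlam2r : lam ^ 2 / r ≤ lam := by
    rw [div_le_iff₀ hr]
    nlinarith
  have hpK : p ∈ Metric.closedBall x 1 := by
    rw [Metric.mem_closedBall, dist_eq_norm, hpxnorm]
    calc lam ^ 2 / r ≤ lam := hlam2r
      _ ≤ r₀ := hlamr₀.le
      _ ≤ 1 := hr₀1
  clear_value r p
  rcases le_or_gt r r₀ with hcase | hcase
  · -- near region : r ≤ r₀
    have hyK : y ∈ Metric.closedBall x 1 := by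
      rw [Metric.mem_closedBall, dist_eq_norm, ← hrdef]
      exact hcase.trans hr₀1
    set t := lam / r with htdef
    have ht0 : 0 < t := div_pos hlam hr
    have ht1 : t ≤ 1 := (div_le_one hr).mpr hyr
    have hT1 : t ^ β ≤ 1 := Real.rpow_le_one ht0.le ht1 hβ.le
    have hT0 : 0 < t ^ β := Real.rpow_pos_of_pos ht0 β
    have key := rpow_key_ineq hβ ht0 ht1
    clear_value t
    have hs1 : lam ^ 2 / r ^ 2 ≤ 1 := by
      rw [div_le_one (by positivity)]
      nlinarith
    have h1 : p - y = (lam ^ 2 / r ^ 2 - 1) • (y - x) := by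
      rw [hpdef, sub_smul, one_smul]
      abel
    have hpy : ‖p - y‖ = (1 - lam ^ 2 / r ^ 2) * r := by
      rw [h1, norm_smul, Real.norm_eq_abs, abs_of_nonpos (by linarith), ← hrdef]
      ring
    have hLipe : u p - u y ≤ L * ((1 - lam ^ 2 / r ^ 2) * r) := by
      have h := hLip p hpK y hyK
      rw [hpy] at h
      exact (le_abs_self _).trans (by rwa [Real.norm_eq_abs] at h)
    have hcy : c ≤ u y := hcle y hyK
    have h2Lr : 2 * (L + 1) * r ≤ β * c := by
      have h := hcase.trans (min_le_right 1 (β * c / (2 * (L + 1))))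
      rw [le_div_iff₀ (by positivity)] at h
      linarith
    have e0 : 1 - lam ^ 2 / r ^ 2 = (1 - t) * (1 + t) := by
      rw [htdef]
      field_simp
      ring
    rw [e0] at hLipe
    obtain ⟨T, hTdef⟩ : ∃ T : ℝ, T = t ^ β := ⟨_, rfl⟩
    rw [← hTdef] at hT1 hT0 key ⊢
    have ht1' : (0:ℝ) ≤ 1 - t := by linarith
    clear hliminf hbound hev hRev hRfar hfarb hzc hzM hzL hfc hu hLip hcle hMle hupos
    have A1 : T * u p ≤ T * u y + T * (L * ((1 - t) * (1 + t) * r)) := by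
      have h := mul_le_mul_of_nonneg_left hLipe hT0.le
      nlinarith [h]
    have A2 : T * (L * ((1 - t) * (1 + t) * r)) ≤ (T * (1 - t)) * (2 * (L + 1) * r) := by
      have hA : (0:ℝ) ≤ T * (1 - t) * r := mul_nonneg (mul_nonneg hT0.le ht1') hr.le
      have hB : (0:ℝ) ≤ L * (T * (1 - t) ^ 2) * r :=
        mul_nonneg (mul_nonneg hL0 (mul_nonneg hT0.le (sq_nonneg _))) hr.le
      nlinarith [hA, hB]
    have A3 : (T * (1 - t)) * (2 * (L + 1) * r) ≤ (T * (1 - t)) * (β * c) :=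
      mul_le_mul_of_nonneg_left h2Lr (mul_nonneg hT0.le ht1')
    have A4 : (T * (1 - t)) * (β * c) ≤ (1 - T) * c := by
      have h := mul_le_mul_of_nonneg_right key hc.le
      nlinarith [h]
    have A5 : (1 - T) * c ≤ (1 - T) * u y :=
      mul_le_mul_of_nonneg_left hcy (by linarith)
    nlinarith [A1, A2, A3, A4, A5]
  · -- far region : r > r₀
    have hrle : r₀ ≤ ‖y - x‖ := by rw [← hrdef]; exact hcase.le
    have hrb := hfarb y hrle
    rw [← hrdef] at hrb
    have hupM : u p ≤ M := hMle p hpK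
    have hlamε : lam ^ β * M ≤ ε := by
      have h1 : lam ≤ (ε / M) ^ (β⁻¹ : ℝ) :=
        le_of_lt (lt_of_lt_of_le hlamlt (min_le_right _ _))
      have h2 : lam ^ β ≤ ((ε / M) ^ (β⁻¹ : ℝ)) ^ β :=
        Real.rpow_le_rpow hlam.le h1 hβ.le
      rw [Real.rpow_inv_rpow (le_of_lt (div_pos hε hM)) hβ.ne'] at h2
      calc lam ^ β * M ≤ ε / M * M := mul_le_mul_of_nonneg_right h2 hM.le
        _ = ε := div_mul_cancel₀ ε hM.ne'
    have hrpow : (0:ℝ) < r ^ β := Real.rpow_pos_of_pos hr β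
    rw [Real.div_rpow hlam.le hr.le, div_mul_eq_mul_div, div_le_iff₀ hrpow]
    calc lam ^ β * u p ≤ lam ^ β * M :=
          mul_le_mul_of_nonneg_left hupM (Real.rpow_nonneg hlam.le β)
      _ ≤ ε := hlamε
      _ ≤ r ^ β * u y := hrb
      _ = u y * r ^ β := mul_comm _ _
end

section
/- Let n ≥ 1, p > 0, q > 0, and let u : ℝⁿ → [0,∞] be measurable with u(x) = ∫_{ℝⁿ} |x-y|^p u(y)^{-q} dy for all x ∈ ℝⁿ, and u not identically +∞. Then ∫_{ℝⁿ} (1 + |y|^p) u(y)^{-q} dy < ∞. -/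
open MeasureTheory
open scoped ENNReal

theorem weighted_integrability (n : ℕ) (hn : 1 ≤ n) (p q : ℝ) (hp : 0 < p) (hq : 0 < q)
    (u : EuclideanSpace ℝ (Fin n) → ℝ≥0∞) (hu : Measurable u)
    (heq : ∀ x, u x = ∫⁻ y, (ENNReal.ofReal ‖x - y‖) ^ p * u y ^ (-q))
    (hne : ¬ ∀ x, u x = ⊤) :
    (∫⁻ y, (1 + (ENNReal.ofReal ‖y‖) ^ p) * u y ^ (-q)) < ⊤ := by
  haveI : Nontrivial (EuclideanSpace ℝ (Fin n)) := by
    refine ⟨0, EuclideanSpace.single ⟨0, hn⟩ 1, fun h => ?_⟩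
    have := congrArg (fun v => v ⟨0, hn⟩) h
    simp [EuclideanSpace.single_apply] at this
  set f : EuclideanSpace ℝ (Fin n) → ℝ≥0∞ := fun y => u y ^ (-q) with hfdef
  have hf : Measurable f := hu.pow measurable_const
  obtain ⟨x₀, hx₀⟩ : ∃ x₀, u x₀ ≠ ⊤ := by
    by_contra h
    push_neg at h
    exact hne h
  have hK : ∀ x : EuclideanSpace ℝ (Fin n), Measurable
      (fun y => (ENNReal.ofReal ‖x - y‖) ^ p * f y) := fun x =>
    ((measurable_const.sub measurable_id).norm.ennreal_ofReal.pow measurable_const).mul hf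
  -- Step A : integral of f away from x₀ is finite
  have stepA : ∀ ε : ℝ, 0 < ε →
      ∫⁻ y in {y | ε ≤ ‖x₀ - y‖}, f y < ⊤ := by
    intro ε hε
    have hεp : (0 : ℝ≥0∞) < ENNReal.ofReal ε ^ p := by
      apply ENNReal.rpow_pos (by simpa using hε) (by simp)
    have hle : ENNReal.ofReal ε ^ p * ∫⁻ y in {y | ε ≤ ‖x₀ - y‖}, f y ≤ u x₀ := by
      rw [← lintegral_const_mul _ hf, heq x₀]
      refine le_trans (setLIntegral_mono (hK x₀) ?_) (setLIntegral_le_lintegral _ _)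
      intro y hy
      exact mul_le_mul_left (ENNReal.rpow_le_rpow (ENNReal.ofReal_le_ofReal hy) hp.le) _
    by_contra h
    push_neg at h
    rw [top_le_iff.mp h, ENNReal.mul_top hεp.ne'] at hle
    exact hx₀ (top_le_iff.mp hle)
  -- Step B : integral of f near x₀ is finite for some ball
  have stepB : ∃ ε : ℝ, 0 < ε ∧ ∫⁻ y in Metric.ball x₀ ε, f y < ⊤ := by
    by_contra h
    push_neg at h
    have hball : ∀ ε : ℝ, 0 < ε → ∫⁻ y in Metric.ball x₀ ε, f y = ⊤ := fun ε hε =>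
      top_le_iff.mp (h ε hε)
    -- every x ≠ x₀ has u x = ⊤
    have hall : ∀ x, x ≠ x₀ → u x = ⊤ := by
      intro x hx
      set d : ℝ := ‖x - x₀‖ with hd
      have hd0 : 0 < d := by
        simpa [hd] using sub_ne_zero.mpr hx
      have hc : (0:ℝ≥0∞) < ENNReal.ofReal (d/2) ^ p :=
        ENNReal.rpow_pos (by simpa using half_pos hd0) (by simp)
      have hlb : ENNReal.ofReal (d/2) ^ p * ∫⁻ y in Metric.ball x₀ (d/2), f y ≤ u x := by
        rw [← lintegral_const_mul _ hf, heq x]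
        refine le_trans (setLIntegral_mono (hK x) ?_) (setLIntegral_le_lintegral _ _)
        intro y hy
        have hyd : d / 2 ≤ ‖x - y‖ := by
          have h1 : ‖x₀ - y‖ < d / 2 := by
            simpa [dist_eq_norm, norm_sub_rev] using hy
          have h2 : d ≤ ‖x - y‖ + ‖x₀ - y‖ := by
            calc d = ‖(x - y) + (y - x₀)‖ := by rw [hd]; congr 1; abel
              _ ≤ ‖x - y‖ + ‖y - x₀‖ := norm_add_le _ _
              _ = ‖x - y‖ + ‖x₀ - y‖ := by rw [norm_sub_rev y x₀]
          linarith
        exact mul_le_mul_left (ENNReal.rpow_le_rpow (ENNReal.ofReal_le_ofReal hyd) hp.le) _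
      rw [hball _ (half_pos hd0), ENNReal.mul_top hc.ne'] at hlb
      exact top_le_iff.mp hlb
    -- then f = 0 a.e., so u ≡ 0, contradiction
    have hne' : ∀ᵐ y : EuclideanSpace ℝ (Fin n), y ≠ x₀ := by
      rw [ae_iff]
      simp [Set.setOf_eq_eq_singleton]
    have hfae : ∀ᵐ y, f y = 0 := by
      filter_upwards [hne'] with y hy
      rw [hfdef]
      simp only
      rw [hall y hy, ENNReal.top_rpow_of_neg (neg_neg_iff_pos.mpr hq)]
    obtain ⟨x₁, hx₁⟩ := exists_ne x₀
    have : u x₁ = 0 := by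
      rw [heq x₁]
      rw [lintegral_eq_zero_iff (hK x₁)]
      filter_upwards [hfae] with y hy
      simp [hy]
    rw [hall x₁ hx₁] at this
    exact (ENNReal.top_ne_zero) this
  obtain ⟨ε, hε, hball⟩ := stepB
  -- total integral of f is finite
  have hI : ∫⁻ y, f y < ⊤ := by
    rw [← lintegral_add_compl f measurableSet_ball (μ := volume) (A := Metric.ball x₀ ε)]
    refine ENNReal.add_lt_top.mpr ⟨hball, ?_⟩
    refine lt_of_le_of_lt (lintegral_mono_set ?_) (stepA ε hε)
    intro y hy
    simp only [Metric.mem_ball, not_lt, Set.mem_compl_iff] at hy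
    simpa [dist_eq_norm, norm_sub_rev] using hy
  -- weighted integral
  have hJ : ∫⁻ y, (ENNReal.ofReal ‖y‖) ^ p * f y < ⊤ := by
    have hbd : ∀ y : EuclideanSpace ℝ (Fin n),
        (ENNReal.ofReal ‖y‖) ^ p ≤
          (2:ℝ≥0∞) ^ p * (ENNReal.ofReal ‖x₀‖ ^ p + ENNReal.ofReal ‖x₀ - y‖ ^ p) := by
      intro y
      set a := ENNReal.ofReal ‖x₀‖
      set b := ENNReal.ofReal ‖x₀ - y‖
      have h1 : ENNReal.ofReal ‖y‖ ≤ a + b := by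
        rw [← ENNReal.ofReal_add (norm_nonneg _) (norm_nonneg _)]
        apply ENNReal.ofReal_le_ofReal
        calc ‖y‖ = ‖x₀ - (x₀ - y)‖ := by rw [sub_sub_cancel]
          _ ≤ ‖x₀‖ + ‖x₀ - y‖ := norm_sub_le _ _
      have h2 : a + b ≤ 2 * max a b := by
        rw [two_mul]
        exact add_le_add (le_max_left a b) (le_max_right a b)
      calc (ENNReal.ofReal ‖y‖) ^ p ≤ (2 * max a b) ^ p :=
            ENNReal.rpow_le_rpow (h1.trans h2) hp.le
        _ = 2 ^ p * (max a b) ^ p := ENNReal.mul_rpow_of_nonneg _ _ hp.le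
        _ ≤ 2 ^ p * (a ^ p + b ^ p) := by
            gcongr
            rcases max_cases a b with ⟨h, _⟩ | ⟨h, _⟩ <;> rw [h]
            · exact le_self_add
            · exact le_add_self
    calc ∫⁻ y, (ENNReal.ofReal ‖y‖) ^ p * f y
        ≤ ∫⁻ y, (2:ℝ≥0∞) ^ p * (ENNReal.ofReal ‖x₀‖ ^ p * f y
            + ENNReal.ofReal ‖x₀ - y‖ ^ p * f y) := by
          refine lintegral_mono fun y => ?_
          rw [← add_mul, ← mul_assoc]
          exact mul_le_mul_left (hbd y) _
      _ = 2 ^ p * ((∫⁻ y, ENNReal.ofReal ‖x₀‖ ^ p * f y)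
            + ∫⁻ y, ENNReal.ofReal ‖x₀ - y‖ ^ p * f y) := by
          rw [lintegral_const_mul _ (show Measurable (fun y => ENNReal.ofReal ‖x₀‖ ^ p * f y + ENNReal.ofReal ‖x₀ - y‖ ^ p * f y) from (measurable_const.mul hf).add (hK x₀)),
            lintegral_add_left (show Measurable (fun y => ENNReal.ofReal ‖x₀‖ ^ p * f y) from measurable_const.mul hf)]
      _ < ⊤ := by
          refine ENNReal.mul_lt_top (ENNReal.rpow_lt_top_of_nonneg hp.le (by simp : (2:ℝ≥0∞) ≠ ⊤)) ?_
          refine ENNReal.add_lt_top.mpr ⟨?_, ?_⟩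
          · rw [lintegral_const_mul _ hf]
            exact ENNReal.mul_lt_top (ENNReal.rpow_lt_top_of_nonneg hp.le (by simp : ENNReal.ofReal ‖x₀‖ ≠ ⊤)) hI
          · rw [← heq x₀]
            exact hx₀.lt_top
  calc ∫⁻ y, (1 + (ENNReal.ofReal ‖y‖) ^ p) * u y ^ (-q)
      = ∫⁻ y, (f y + (ENNReal.ofReal ‖y‖) ^ p * f y) := by
        refine lintegral_congr fun y => ?_
        rw [add_mul, one_mul]
    _ = (∫⁻ y, f y) + ∫⁻ y, (ENNReal.ofReal ‖y‖) ^ p * f y := lintegral_add_left hf _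
    _ < ⊤ := ENNReal.add_lt_top.mpr ⟨hI, hJ⟩
end

section
/- Let n ≥ 1, p > 0, q > 0, and let u be a measurable solution of u(x) = ∫_{ℝⁿ} |x-y|^p u(y)^{-q} dy that is finite somewhere. Then lim_{|x|→∞} |x|^{-p} u(x) = ∫_{ℝⁿ} u(y)^{-q} dy, which is a finite positive number. -/
open MeasureTheory Filter
open scoped ENNReal
open Metric Set

lemma aux_lower (n : ℕ) (hn : 1 ≤ n) (p q : ℝ) (hp : 0 < p) (hq : 0 < q)
    (u : EuclideanSpace ℝ (Fin n) → ℝ≥0∞) (hu : Measurable u)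
    (heq : ∀ x, u x = ∫⁻ y, (ENNReal.ofReal ‖x - y‖) ^ p * u y ^ (-q))
    (hI : ∫⁻ y, u y ^ (-q) ≠ 0) :
    ∃ c : ℝ≥0∞, 0 < c ∧ c ≠ ⊤ ∧ ∀ x, c ≤ u x := by
  classical
  have hnt : Nontrivial (EuclideanSpace ℝ (Fin n)) := by
    refine ⟨⟨EuclideanSpace.single ⟨0, hn⟩ (1:ℝ), 0, fun h => ?_⟩⟩
    have := congrArg (fun v : EuclideanSpace ℝ (Fin n) => v ⟨0, hn⟩) h
    simp at this
  set g : EuclideanSpace ℝ (Fin n) → ℝ≥0∞ := fun y => u y ^ (-q) with hgdef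
  have gmeas : Measurable g := hu.pow_const _
  -- the set where g is not 0 has positive measure
  have hne : volume {y | g y ≠ 0} ≠ 0 := by
    intro h
    exact hI ((lintegral_eq_zero_iff gmeas).2 (by rwa [EventuallyEq, ae_iff]))
  -- find k with positive measure set
  have hsub : {y | g y ≠ 0} ⊆ ⋃ k : ℕ, ({y | ((k:ℝ≥0∞)+1)⁻¹ ≤ g y} ∩ ball 0 (k+1)) := by
    intro y hy
    obtain ⟨k₁, hk₁⟩ := ENNReal.exists_inv_nat_lt (hy : g y ≠ 0)
    obtain ⟨k₂, hk₂⟩ := exists_nat_gt ‖y‖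
    refine mem_iUnion.2 ⟨max k₁ k₂, ?_, ?_⟩
    · have hle : (k₁:ℝ≥0∞) ≤ ((max k₁ k₂ : ℕ) : ℝ≥0∞) + 1 := by
        exact_mod_cast Nat.le_succ_of_le (le_max_left k₁ k₂)
      exact le_trans (ENNReal.inv_le_inv.2 hle) hk₁.le
    · simp only [mem_ball, dist_zero_right]
      calc ‖y‖ < k₂ := hk₂
        _ ≤ (max k₁ k₂ : ℕ) := by exact_mod_cast le_max_right k₁ k₂
        _ ≤ (max k₁ k₂ : ℕ) + 1 := by linarith
  obtain ⟨k, hk⟩ : ∃ k : ℕ, volume ({y | ((k:ℝ≥0∞)+1)⁻¹ ≤ g y} ∩ ball 0 ((k:ℝ)+1)) ≠ 0 := by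
    by_contra h
    push_neg at h
    exact hne (measure_mono_null hsub (by simpa using measure_iUnion_null h))
  set δ : ℝ≥0∞ := ((k:ℝ≥0∞)+1)⁻¹ with hδdef
  have hδ0 : 0 < δ := ENNReal.inv_pos.2 (by simp [ENNReal.add_eq_top])
  set S := {y | δ ≤ g y} ∩ ball (0 : EuclideanSpace ℝ (Fin n)) ((k:ℝ)+1) with hSdef
  have hSmeas : MeasurableSet S := (gmeas measurableSet_Ici).inter measurableSet_ball
  set m := volume S with hmdef
  have hm0 : 0 < m := pos_iff_ne_zero.2 hk
  set ε := min m 1 / 2 with hεdef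
  have hmin0 : (m ⊓ 1) ≠ 0 := (lt_min hm0 zero_lt_one).ne'
  have hε0 : 0 < ε := ENNReal.half_pos hmin0
  have hεm : ε < m := lt_of_lt_of_le (ENNReal.half_lt_self hmin0
    (ne_top_of_le_ne_top (by simp) (min_le_right m 1))) (min_le_left m 1)
  -- find small radius ρ with volume of closed ball < ε
  obtain ⟨ρ, hρ0, hρ⟩ : ∃ ρ : ℝ, 0 < ρ ∧
      volume (closedBall (0 : EuclideanSpace ℝ (Fin n)) ρ) < ε := by
    have hmono : Antitone fun j : ℕ => closedBall (0 : EuclideanSpace ℝ (Fin n)) ((j:ℝ)+1)⁻¹ := by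
      intro a b hab
      exact closedBall_subset_closedBall (by
        apply inv_anti₀ (by positivity)
        exact_mod_cast by exact_mod_cast add_le_add_left (Nat.cast_le.2 hab) 1)
    have h0 : (⋂ j : ℕ, closedBall (0 : EuclideanSpace ℝ (Fin n)) ((j:ℝ)+1)⁻¹) = {0} := by
      ext x
      simp only [mem_iInter, mem_closedBall, dist_zero_right, mem_singleton_iff]
      constructor
      · intro h
        by_contra hx
        have hx' : 0 < ‖x‖ := norm_pos_iff.2 hx
        obtain ⟨j, hj⟩ := exists_nat_gt ‖x‖⁻¹
        have h1 : ‖x‖⁻¹ < (j:ℝ)+1 := hj.trans_le (by linarith)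
        have h2 : ((j:ℝ)+1)⁻¹ < ‖x‖ := by
          have := inv_strictAnti₀ (inv_pos.2 hx') h1
          rwa [inv_inv] at this
        linarith [h j]
      · rintro rfl; intro j; simp; positivity
    have htend := tendsto_measure_iInter_atTop
      (μ := (volume : Measure (EuclideanSpace ℝ (Fin n))))
      (s := fun j : ℕ => closedBall 0 ((j:ℝ)+1)⁻¹)
      (fun j => measurableSet_closedBall.nullMeasurableSet) hmono
      ⟨0, (measure_closedBall_lt_top).ne⟩
    rw [h0, measure_singleton] at htend
    have := htend.eventually_lt_const hε0
    obtain ⟨j, hj⟩ := this.exists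
    exact ⟨((j:ℝ)+1)⁻¹, by positivity, hj⟩
  -- uniform lower bound
  set c := ENNReal.ofReal ρ ^ p * δ * (m - ε) with hcdef
  have hc0 : 0 < c :=
    ENNReal.mul_pos (ENNReal.mul_pos
      (ENNReal.rpow_pos (ENNReal.ofReal_pos.2 hρ0) ENNReal.ofReal_ne_top).ne' hδ0.ne').ne'
      (tsub_pos_of_lt hεm).ne'
  have hcle : ∀ x, c ≤ u x := by
    intro x
    have hT : MeasurableSet (S \ closedBall x ρ) := hSmeas.diff measurableSet_closedBall
    have hmeasT : m - ε ≤ volume (S \ closedBall x ρ) := by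
      have hsplit : S ⊆ (S \ closedBall x ρ) ∪ (S ∩ closedBall x ρ) := by
        intro y hy
        by_cases h : y ∈ closedBall x ρ
        · exact Or.inr ⟨hy, h⟩
        · exact Or.inl ⟨hy, h⟩
      have h1 : m ≤ volume (S \ closedBall x ρ) + volume (S ∩ closedBall x ρ) :=
        le_trans (measure_mono hsplit) (measure_union_le _ _)
      have h2 : volume (S ∩ closedBall x ρ) ≤ ε := by
        refine le_trans (measure_mono inter_subset_right) ?_
        rw [Measure.addHaar_closedBall_center]
        exact hρ.le
      exact tsub_le_iff_right.2 (h1.trans (add_le_add (le_refl _) h2))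
    calc c ≤ ENNReal.ofReal ρ ^ p * δ * volume (S \ closedBall x ρ) := by
          exact mul_le_mul_right hmeasT _
      _ = ∫⁻ _ in S \ closedBall x ρ, ENNReal.ofReal ρ ^ p * δ := by
          rw [setLIntegral_const]
      _ ≤ ∫⁻ y in S \ closedBall x ρ, ENNReal.ofReal ‖x - y‖ ^ p * g y := by
          refine setLIntegral_mono' hT ?_
          rintro y ⟨hyS, hyB⟩
          refine mul_le_mul' ?_ hyS.1
          refine ENNReal.rpow_le_rpow ?_ hp.le
          refine ENNReal.ofReal_le_ofReal ?_
          have : ρ < dist y x := by simpa [mem_closedBall, not_le] using hyB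
          rw [dist_comm, dist_eq_norm] at this
          exact this.le
      _ ≤ ∫⁻ y, ENNReal.ofReal ‖x - y‖ ^ p * g y := setLIntegral_le_lintegral _ _
      _ = u x := (heq x).symm
  exact ⟨min c 1, lt_min hc0 zero_lt_one, ne_top_of_le_ne_top (by simp) (min_le_right _ _),
    fun x => le_trans (min_le_left _ _) (hcle x)⟩

theorem asymptotic_limit (n : ℕ) (hn : 1 ≤ n) (p q : ℝ) (hp : 0 < p) (hq : 0 < q)
    (u : EuclideanSpace ℝ (Fin n) → ℝ≥0∞) (hu : Measurable u) (hupos : ∀ x, 0 < u x)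
    (heq : ∀ x, u x = ∫⁻ y, (ENNReal.ofReal ‖x - y‖) ^ p * u y ^ (-q))
    (hfin : ∃ x, u x ≠ ⊤) :
    Tendsto (fun x : EuclideanSpace ℝ (Fin n) => (ENNReal.ofReal ‖x‖) ^ (-p) * u x)
        (comap (fun x : EuclideanSpace ℝ (Fin n) => ‖x‖) atTop)
        (nhds (∫⁻ y, u y ^ (-q))) ∧
      0 < (∫⁻ y, u y ^ (-q)) ∧ (∫⁻ y, u y ^ (-q)) < ⊤ := by
  obtain ⟨x₀, hx₀⟩ := hfin
  set l := comap (fun x : EuclideanSpace ℝ (Fin n) => ‖x‖) atTop with hldef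
  set g : EuclideanSpace ℝ (Fin n) → ℝ≥0∞ := fun y => u y ^ (-q) with hgdef
  have gmeas : Measurable g := hu.pow_const _
  have hKmeas : ∀ x : EuclideanSpace ℝ (Fin n),
      Measurable fun y : EuclideanSpace ℝ (Fin n) => ENNReal.ofReal ‖x - y‖ ^ p * g y := by
    intro x
    exact ((((measurable_const.sub measurable_id).norm).ennreal_ofReal).pow_const p).mul gmeas
  have hI0 : (∫⁻ y, g y) ≠ 0 := by
    intro h
    have hg0 : g =ᵐ[volume] 0 := (lintegral_eq_zero_iff gmeas).1 h
    have hz : u x₀ = 0 := by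
      rw [heq x₀]
      have he : (fun y => ENNReal.ofReal ‖x₀ - y‖ ^ p * g y) =ᵐ[volume] 0 := by
        filter_upwards [hg0] with y hy
        simp only [Pi.zero_apply] at hy ⊢
        simp [hy]
      rw [lintegral_congr_ae he]
      simp
    exact (hupos x₀).ne' hz
  obtain ⟨c, hc0, hctop, hcle⟩ := aux_lower n hn p q hp hq u hu heq hI0
  have hgle : ∀ y, g y ≤ c ^ (-q) := by
    intro y
    rw [hgdef]
    simp only
    rw [ENNReal.rpow_neg, ENNReal.rpow_neg]
    exact ENNReal.inv_le_inv.2 (ENNReal.rpow_le_rpow (hcle y) hq.le)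
  have hctop' : c ^ (-q) ≠ ⊤ := by
    rw [ENNReal.rpow_neg]
    exact ENNReal.inv_ne_top.2 (ENNReal.rpow_pos hc0 hctop).ne'
  set B : EuclideanSpace ℝ (Fin n) → ℝ≥0∞ :=
    fun y => ENNReal.ofReal (1 + ‖y‖) ^ p * g y with hBdef
  have hkey : ∀ y : EuclideanSpace ℝ (Fin n), y ∉ closedBall x₀ 1 →
      ENNReal.ofReal (1 + ‖y‖) ^ p ≤
        ENNReal.ofReal (2 + ‖x₀‖) ^ p * ENNReal.ofReal ‖x₀ - y‖ ^ p := by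
    intro y hy
    rw [← ENNReal.mul_rpow_of_nonneg _ _ hp.le, ← ENNReal.ofReal_mul (by positivity)]
    refine ENNReal.rpow_le_rpow (ENNReal.ofReal_le_ofReal ?_) hp.le
    have h1 : (1:ℝ) < ‖x₀ - y‖ := by
      have := hy
      rw [mem_closedBall, not_le, dist_eq_norm, ← norm_sub_rev] at this
      exact this
    have h2 : ‖y‖ - ‖x₀‖ ≤ ‖x₀ - y‖ := by
      have := norm_sub_norm_le y x₀
      rwa [norm_sub_rev] at this
    nlinarith [norm_nonneg x₀, norm_nonneg y]
  have hsmeas : MeasurableSet (closedBall x₀ 1) := measurableSet_closedBall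
  have hJ : (∫⁻ y, B y) ≠ ⊤ := by
    rw [← lintegral_add_compl B hsmeas]
    refine ENNReal.add_ne_top.2 ⟨?_, ?_⟩
    · have hle : ∫⁻ y in closedBall x₀ 1, B y ≤
          ∫⁻ _ in closedBall x₀ 1, ENNReal.ofReal (2 + ‖x₀‖) ^ p * c ^ (-q) := by
        refine setLIntegral_mono' hsmeas ?_
        intro y hy
        refine mul_le_mul' (ENNReal.rpow_le_rpow (ENNReal.ofReal_le_ofReal ?_) hp.le) (hgle y)
        have h2 : ‖y‖ - ‖x₀‖ ≤ ‖y - x₀‖ := norm_sub_norm_le y x₀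
        have h3 : ‖y - x₀‖ ≤ 1 := by rwa [mem_closedBall, dist_eq_norm] at hy
        linarith
      refine ne_top_of_le_ne_top ?_ hle
      rw [setLIntegral_const]
      exact ENNReal.mul_ne_top
        (ENNReal.mul_ne_top (ENNReal.rpow_ne_top_of_nonneg hp.le ENNReal.ofReal_ne_top) hctop')
        measure_closedBall_lt_top.ne
    · have hle2 : ∫⁻ y in (closedBall x₀ 1)ᶜ, B y ≤ ENNReal.ofReal (2 + ‖x₀‖) ^ p * u x₀ := by
        calc ∫⁻ y in (closedBall x₀ 1)ᶜ, B y
            ≤ ∫⁻ y in (closedBall x₀ 1)ᶜ,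
                ENNReal.ofReal (2 + ‖x₀‖) ^ p * (ENNReal.ofReal ‖x₀ - y‖ ^ p * g y) := by
              refine setLIntegral_mono' hsmeas.compl ?_
              intro y hy
              rw [← mul_assoc]
              exact mul_le_mul' (hkey y hy) le_rfl
          _ ≤ ∫⁻ y, ENNReal.ofReal (2 + ‖x₀‖) ^ p * (ENNReal.ofReal ‖x₀ - y‖ ^ p * g y) :=
              setLIntegral_le_lintegral _ _
          _ = ENNReal.ofReal (2 + ‖x₀‖) ^ p * u x₀ := by
              rw [lintegral_const_mul _ (hKmeas x₀), ← heq x₀]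
      exact ne_top_of_le_ne_top (ENNReal.mul_ne_top
        (ENNReal.rpow_ne_top_of_nonneg hp.le ENNReal.ofReal_ne_top) hx₀) hle2
  have hIJ : (∫⁻ y, g y) ≤ ∫⁻ y, B y := by
    refine lintegral_mono fun y => ?_
    conv_lhs => rw [← one_mul (g y)]
    refine mul_le_mul' ?_ le_rfl
    calc (1:ℝ≥0∞) = 1 ^ p := (ENNReal.one_rpow p).symm
      _ ≤ ENNReal.ofReal (1 + ‖y‖) ^ p := by
          refine ENNReal.rpow_le_rpow ?_ hp.le
          rw [← ENNReal.ofReal_one]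
          exact ENNReal.ofReal_le_ofReal (by linarith [norm_nonneg y])
  have hItop : (∫⁻ y, g y) < ⊤ := lt_of_le_of_lt hIJ (lt_top_iff_ne_top.2 hJ)
  refine ⟨?_, pos_iff_ne_zero.2 hI0, hItop⟩
  have hnorm : Tendsto (fun x : EuclideanSpace ℝ (Fin n) => ‖x‖) l atTop := tendsto_comap
  have hmain : Tendsto (fun x : EuclideanSpace ℝ (Fin n) =>
      ∫⁻ y, ENNReal.ofReal ‖x‖ ^ (-p) * (ENNReal.ofReal ‖x - y‖ ^ p * g y)) l
      (nhds (∫⁻ y, g y)) := by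
    refine tendsto_lintegral_filter_of_dominated_convergence B ?_ ?_ hJ ?_
    · exact Eventually.of_forall fun x => (hKmeas x).const_mul _
    · filter_upwards [hnorm.eventually_ge_atTop 1] with x hx
      refine ae_of_all _ fun y => ?_
      have hx0 : ENNReal.ofReal ‖x‖ ≠ 0 := (ENNReal.ofReal_pos.2 (by linarith)).ne'
      have h1 : ENNReal.ofReal ‖x - y‖ ^ p ≤
          ENNReal.ofReal ‖x‖ ^ p * ENNReal.ofReal (1 + ‖y‖) ^ p := by
        rw [← ENNReal.mul_rpow_of_nonneg _ _ hp.le, ← ENNReal.ofReal_mul (norm_nonneg x)]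
        refine ENNReal.rpow_le_rpow (ENNReal.ofReal_le_ofReal ?_) hp.le
        have h2 := norm_sub_le x y
        nlinarith [norm_nonneg y, norm_nonneg x]
      calc ENNReal.ofReal ‖x‖ ^ (-p) * (ENNReal.ofReal ‖x - y‖ ^ p * g y)
          ≤ ENNReal.ofReal ‖x‖ ^ (-p) *
              (ENNReal.ofReal ‖x‖ ^ p * ENNReal.ofReal (1 + ‖y‖) ^ p * g y) :=
            mul_le_mul' le_rfl (mul_le_mul' h1 le_rfl)
        _ = (ENNReal.ofReal ‖x‖ ^ (-p) * ENNReal.ofReal ‖x‖ ^ p) *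
              (ENNReal.ofReal (1 + ‖y‖) ^ p * g y) := by ring
        _ = B y := by
            rw [← ENNReal.rpow_add _ _ hx0 ENNReal.ofReal_ne_top, neg_add_cancel,
              ENNReal.rpow_zero, one_mul]
    · refine ae_of_all _ fun y => ?_
      have h1 : Tendsto (fun x : EuclideanSpace ℝ (Fin n) =>
          ENNReal.ofReal ‖x‖ ^ (-p) * ENNReal.ofReal ‖x - y‖ ^ p) l (nhds 1) := by
        have hev : ∀ᶠ x in l, ‖y‖ + 1 ≤ ‖x‖ := hnorm.eventually_ge_atTop _
        have heqev : (fun x : EuclideanSpace ℝ (Fin n) =>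
            ENNReal.ofReal (‖x‖ ^ (-p) * ‖x - y‖ ^ p)) =ᶠ[l]
            (fun x => ENNReal.ofReal ‖x‖ ^ (-p) * ENNReal.ofReal ‖x - y‖ ^ p) := by
          filter_upwards [hev] with x hx
          have hx0 : (0:ℝ) < ‖x‖ := by linarith [norm_nonneg y]
          have hxy0 : (0:ℝ) < ‖x - y‖ := by
            have := norm_sub_norm_le x y; linarith
          rw [ENNReal.ofReal_mul (Real.rpow_nonneg hx0.le _),
            ← ENNReal.ofReal_rpow_of_pos hx0, ← ENNReal.ofReal_rpow_of_pos hxy0]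
        refine Tendsto.congr' heqev ?_
        have hreal : Tendsto (fun x : EuclideanSpace ℝ (Fin n) =>
            ‖x‖ ^ (-p) * ‖x - y‖ ^ p) l (nhds 1) := by
          have hdiv : Tendsto (fun x : EuclideanSpace ℝ (Fin n) => ‖x - y‖ / ‖x‖) l (nhds 1) := by
            have h0 : Tendsto (fun x : EuclideanSpace ℝ (Fin n) => ‖y‖ / ‖x‖) l (nhds 0) :=
              tendsto_const_nhds.div_atTop hnorm
            have hup : Tendsto (fun x : EuclideanSpace ℝ (Fin n) => 1 + ‖y‖ / ‖x‖) l (nhds 1) := by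
              simpa using tendsto_const_nhds.add h0
            have hlo : Tendsto (fun x : EuclideanSpace ℝ (Fin n) => 1 - ‖y‖ / ‖x‖) l (nhds 1) := by
              simpa using tendsto_const_nhds.sub h0
            refine tendsto_of_tendsto_of_tendsto_of_le_of_le' hlo hup ?_ ?_
            · filter_upwards [hnorm.eventually_ge_atTop 1] with x hx
              have hx0 : (0:ℝ) < ‖x‖ := by linarith
              have h2 : ‖x‖ - ‖y‖ ≤ ‖x - y‖ := norm_sub_norm_le x y
              calc 1 - ‖y‖ / ‖x‖ = (‖x‖ - ‖y‖) / ‖x‖ := by field_simp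
                _ ≤ ‖x - y‖ / ‖x‖ := by gcongr
            · filter_upwards [hnorm.eventually_ge_atTop 1] with x hx
              have hx0 : (0:ℝ) < ‖x‖ := by linarith
              have h2 : ‖x - y‖ ≤ ‖x‖ + ‖y‖ := norm_sub_le x y
              calc ‖x - y‖ / ‖x‖ ≤ (‖x‖ + ‖y‖) / ‖x‖ := by gcongr
                _ = 1 + ‖y‖ / ‖x‖ := by field_simp
          have hcont : ContinuousAt (fun t : ℝ => t ^ p) 1 :=
            Real.continuousAt_rpow_const 1 p (Or.inr hp.le)
          have hcomp := hcont.tendsto.comp hdiv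
          rw [Real.one_rpow] at hcomp
          refine Tendsto.congr' ?_ hcomp
          filter_upwards [hnorm.eventually_ge_atTop 1] with x hx
          have hx0 : (0:ℝ) < ‖x‖ := by linarith
          show (‖x - y‖ / ‖x‖) ^ p = ‖x‖ ^ (-p) * ‖x - y‖ ^ p
          rw [Real.div_rpow (norm_nonneg _) (norm_nonneg _), Real.rpow_neg (norm_nonneg _),
            div_eq_mul_inv, mul_comm]
        have := ENNReal.tendsto_ofReal hreal
        simpa using this
      have h2 : Tendsto (fun x : EuclideanSpace ℝ (Fin n) =>
          (ENNReal.ofReal ‖x‖ ^ (-p) * ENNReal.ofReal ‖x - y‖ ^ p) * g y) l (nhds (1 * g y)) :=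
        ENNReal.Tendsto.mul_const h1 (Or.inl one_ne_zero)
      rw [one_mul] at h2
      refine h2.congr fun x => ?_
      rw [mul_assoc]
  refine (tendsto_congr fun x => ?_).2 hmain
  rw [heq x]
  exact (lintegral_const_mul _ (hKmeas x)).symm
end

section
/- Let n ≥ 1, p > 0, q > 0, and let u be a measurable solution of u(x) = ∫_{ℝⁿ} |x-y|^p u(y)^{-q} dy, finite somewhere. Then there exists C ≥ 1 such that (1+|x|^p)/C ≤ u(x) ≤ C(1+|x|^p) for all x ∈ ℝⁿ. -/
open MeasureTheory
open scoped ENNReal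
open ENNReal Metric


lemma aux_ennreal_rpow_add (a b : ℝ≥0∞) {p : ℝ} (hp : 0 ≤ p) :
    (a + b) ^ p ≤ 2 ^ p * (a ^ p + b ^ p) := by
  calc (a + b) ^ p ≤ (2 * max a b) ^ p := by
        refine ENNReal.rpow_le_rpow ?_ hp
        rw [two_mul]
        exact add_le_add (le_max_left a b) (le_max_right a b)
    _ = 2 ^ p * (max a b) ^ p := ENNReal.mul_rpow_of_nonneg _ _ hp
    _ ≤ 2 ^ p * (a ^ p + b ^ p) := by
        refine mul_le_mul_right ?_ _
        rcases max_choice a b with h | h <;> rw [h]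
        · exact le_self_add
        · exact le_add_self

lemma aux_real_rpow_add (a b : ℝ) (ha : 0 ≤ a) (hb : 0 ≤ b) {p : ℝ} (hp : 0 ≤ p) :
    (a + b) ^ p ≤ 2 ^ p * (a ^ p + b ^ p) := by
  have hm : 0 ≤ max a b := le_trans ha (le_max_left a b)
  calc (a + b) ^ p ≤ (2 * max a b) ^ p := by
        refine Real.rpow_le_rpow (by linarith) ?_ hp
        rw [two_mul]
        exact add_le_add (le_max_left a b) (le_max_right a b)
    _ = 2 ^ p * (max a b) ^ p := Real.mul_rpow (by norm_num) hm
    _ ≤ 2 ^ p * (a ^ p + b ^ p) := by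
        refine mul_le_mul_of_nonneg_left ?_ (Real.rpow_nonneg (by norm_num) p)
        rcases max_choice a b with h | h <;> rw [h]
        · nlinarith [Real.rpow_nonneg hb p]
        · nlinarith [Real.rpow_nonneg ha p]

lemma growth_bounds_final (n : ℕ) (p q : ℝ) (hp : 0 < p) (hq : 0 < q)
    (u : EuclideanSpace ℝ (Fin n) → ℝ≥0∞)
    (k : ℕ) (hk1 : 1 ≤ k)
    (ε₀ : ℝ≥0∞) (hε₀0 : 0 < ε₀) (hε₀top : ε₀ ≠ ⊤) (hglb : ∀ y, ε₀ ≤ u y)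
    (B : ℝ≥0∞) (hB0 : 0 < B) (hBtop : B ≠ ⊤)
    (hfar : ∀ y : EuclideanSpace ℝ (Fin n), 2 * (k:ℝ) ≤ ‖y‖ →
      ENNReal.ofReal ((‖y‖ / 2) ^ p) * B ≤ u y)
    (I : ℝ≥0∞) (hItop : I ≠ ⊤)
    (x₀ : EuclideanSpace ℝ (Fin n)) (hx₀ : u x₀ ≠ ⊤)
    (hub : ∀ x, u x ≤ 2 ^ p * (ENNReal.ofReal ‖x - x₀‖) ^ p * I + 2 ^ p * u x₀) :
    ∃ C : ℝ, 1 ≤ C ∧ ∀ x,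
      ENNReal.ofReal ((1 + ‖x‖ ^ p) / C) ≤ u x ∧
      u x ≤ ENNReal.ofReal (C * (1 + ‖x‖ ^ p)) := by
  set ek := ε₀.toReal with hekdef
  have he : 0 < ek := ENNReal.toReal_pos hε₀0.ne' hε₀top
  set I' := I.toReal with hI'def
  have hI'0 : 0 ≤ I' := ENNReal.toReal_nonneg
  set b := B.toReal with hbdef
  have hb0 : 0 < b := ENNReal.toReal_pos hB0.ne' hBtop
  set u₀ := (u x₀).toReal with hu₀def
  have hu₀0 : 0 ≤ u₀ := ENNReal.toReal_nonneg
  have hkR : (1:ℝ) ≤ (k:ℝ) := by exact_mod_cast hk1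
  have h2p0 : (0:ℝ) < 2 ^ p := Real.rpow_pos_of_pos (by norm_num) p
  have h4p0 : (0:ℝ) < 4 ^ p := Real.rpow_pos_of_pos (by norm_num) p
  have h2k0 : (0:ℝ) ≤ (2 * (k:ℝ)) ^ p := Real.rpow_nonneg (by linarith) p
  set C : ℝ := 1 + (1 + (2 * (k:ℝ)) ^ p) / ek + 2 * 2 ^ p / b
      + 4 ^ p * I' + (4 ^ p * I' * ‖x₀‖ ^ p + 2 ^ p * u₀) with hCdef
  have hx₀p : (0:ℝ) ≤ ‖x₀‖ ^ p := Real.rpow_nonneg (norm_nonneg _) p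
  have hterm1 : 0 ≤ (1 + (2 * (k:ℝ)) ^ p) / ek := by positivity
  have hterm2 : (0:ℝ) ≤ 2 * 2 ^ p / b := by positivity
  have hterm3 : (0:ℝ) ≤ 4 ^ p * I' := by positivity
  have hterm4 : (0:ℝ) ≤ 4 ^ p * I' * ‖x₀‖ ^ p + 2 ^ p * u₀ := by positivity
  have hC1 : (1:ℝ) ≤ C := by rw [hCdef]; linarith
  have hC0 : (0:ℝ) < C := by linarith
  refine ⟨C, hC1, fun x => ⟨?_, ?_⟩⟩
  · -- lower bound
    have hxp0 : (0:ℝ) ≤ ‖x‖ ^ p := Real.rpow_nonneg (norm_nonneg _) p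
    by_cases hx : ‖x‖ ≤ 2 * (k:ℝ)
    · have hkey : (1 + ‖x‖ ^ p) / C ≤ ek := by
        have h1 : ‖x‖ ^ p ≤ (2 * (k:ℝ)) ^ p :=
          Real.rpow_le_rpow (norm_nonneg _) hx hp.le
        rw [div_le_iff₀ hC0]
        have h2 : (1 + (2 * (k:ℝ)) ^ p) / ek ≤ C := by rw [hCdef]; linarith
        have h3 : 1 + (2 * (k:ℝ)) ^ p ≤ ek * C := by
          rw [← div_le_iff₀' he] ; exact h2
        linarith
      calc ENNReal.ofReal ((1 + ‖x‖ ^ p) / C) ≤ ENNReal.ofReal ek :=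
            ENNReal.ofReal_le_ofReal hkey
        _ = ε₀ := ENNReal.ofReal_toReal hε₀top
        _ ≤ u x := hglb x
    · push_neg at hx
      have hx1 : (1:ℝ) ≤ ‖x‖ := by linarith
      have hxp1 : (1:ℝ) ≤ ‖x‖ ^ p := Real.one_le_rpow hx1 hp.le
      have hdr : (‖x‖ / 2) ^ p = ‖x‖ ^ p / 2 ^ p :=
        Real.div_rpow (norm_nonneg _) (by norm_num) p
      have hC2 : 2 * 2 ^ p / b ≤ C := by rw [hCdef]; linarith
      have hkey : (1 + ‖x‖ ^ p) / C ≤ b * (‖x‖ / 2) ^ p := by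
        have hd0 : (0:ℝ) < 2 * 2 ^ p / b := by positivity
        calc (1 + ‖x‖ ^ p) / C ≤ 2 * ‖x‖ ^ p / C := by
              gcongr
              linarith
          _ ≤ 2 * ‖x‖ ^ p / (2 * 2 ^ p / b) := by
              apply div_le_div_of_nonneg_left (by linarith) hd0 hC2
          _ = b * (‖x‖ / 2) ^ p := by
              rw [hdr]; field_simp
      calc ENNReal.ofReal ((1 + ‖x‖ ^ p) / C) ≤ ENNReal.ofReal (b * (‖x‖ / 2) ^ p) :=
            ENNReal.ofReal_le_ofReal hkey
        _ = ENNReal.ofReal ((‖x‖ / 2) ^ p) * B := by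
            rw [mul_comm, ENNReal.ofReal_mul (by positivity), hbdef,
              ENNReal.ofReal_toReal hBtop]
        _ ≤ u x := hfar x hx.le
  · -- upper bound
    have hxp0 : (0:ℝ) ≤ ‖x‖ ^ p := Real.rpow_nonneg (norm_nonneg _) p
    have h2p : (2:ℝ≥0∞) ^ p = ENNReal.ofReal (2 ^ p) := by
      rw [← ENNReal.ofReal_rpow_of_pos two_pos]; norm_num
    have hreal : 2 ^ p * ‖x - x₀‖ ^ p * I' + 2 ^ p * u₀ ≤ C * (1 + ‖x‖ ^ p) := by
      have h1 : ‖x - x₀‖ ^ p ≤ (‖x‖ + ‖x₀‖) ^ p :=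
        Real.rpow_le_rpow (norm_nonneg _) (norm_sub_le x x₀) hp.le
      have h2 : (‖x‖ + ‖x₀‖) ^ p ≤ 2 ^ p * (‖x‖ ^ p + ‖x₀‖ ^ p) :=
        aux_real_rpow_add _ _ (norm_nonneg _) (norm_nonneg _) hp.le
      have h4 : (4:ℝ) ^ p = 2 ^ p * 2 ^ p := by
        rw [← Real.mul_rpow (by norm_num) (by norm_num)]; norm_num
      have hCa : 4 ^ p * I' ≤ C := by rw [hCdef]; linarith
      have hCb : 4 ^ p * I' * ‖x₀‖ ^ p + 2 ^ p * u₀ ≤ C := by rw [hCdef]; linarith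
      have h5 : 2 ^ p * ‖x - x₀‖ ^ p * I' ≤ 4 ^ p * I' * ‖x‖ ^ p + 4 ^ p * I' * ‖x₀‖ ^ p := by
        calc 2 ^ p * ‖x - x₀‖ ^ p * I' = (2 ^ p * I') * ‖x - x₀‖ ^ p := by ring
          _ ≤ (2 ^ p * I') * (2 ^ p * (‖x‖ ^ p + ‖x₀‖ ^ p)) :=
              mul_le_mul_of_nonneg_left (h1.trans h2) (by positivity)
          _ = 4 ^ p * I' * ‖x‖ ^ p + 4 ^ p * I' * ‖x₀‖ ^ p := by rw [h4]; ring
      have h6 : 4 ^ p * I' * ‖x‖ ^ p ≤ C * ‖x‖ ^ p := mul_le_mul_of_nonneg_right hCa hxp0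
      have h7 : C * (1 + ‖x‖ ^ p) = C + C * ‖x‖ ^ p := by ring
      linarith
    calc u x ≤ 2 ^ p * (ENNReal.ofReal ‖x - x₀‖) ^ p * I + 2 ^ p * u x₀ := hub x
      _ = ENNReal.ofReal (2 ^ p) * ENNReal.ofReal (‖x - x₀‖ ^ p) * ENNReal.ofReal I'
            + ENNReal.ofReal (2 ^ p) * ENNReal.ofReal u₀ := by
          rw [h2p, ENNReal.ofReal_rpow_of_nonneg (norm_nonneg _) hp.le,
            ← ENNReal.ofReal_toReal hItop, ← hI'def,
            ← ENNReal.ofReal_toReal hx₀, ← hu₀def]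
      _ = ENNReal.ofReal (2 ^ p * ‖x - x₀‖ ^ p * I') + ENNReal.ofReal (2 ^ p * u₀) := by
          rw [← ENNReal.ofReal_mul h2p0.le,
            ← ENNReal.ofReal_mul (mul_nonneg h2p0.le (Real.rpow_nonneg (norm_nonneg _) p)),
            ← ENNReal.ofReal_mul h2p0.le]
      _ = ENNReal.ofReal (2 ^ p * ‖x - x₀‖ ^ p * I' + 2 ^ p * u₀) :=
          (ENNReal.ofReal_add (by positivity) (by positivity)).symm
      _ ≤ ENNReal.ofReal (C * (1 + ‖x‖ ^ p)) := ENNReal.ofReal_le_ofReal hreal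

theorem growth_bounds (n : ℕ) (hn : 1 ≤ n) (p q : ℝ) (hp : 0 < p) (hq : 0 < q)
    (u : EuclideanSpace ℝ (Fin n) → ℝ≥0∞) (hu : Measurable u) (hupos : ∀ x, 0 < u x)
    (heq : ∀ x, u x = ∫⁻ y, (ENNReal.ofReal ‖x - y‖) ^ p * u y ^ (-q))
    (hfin : ∃ x, u x ≠ ⊤) :
    ∃ C : ℝ, 1 ≤ C ∧ ∀ x,
      ENNReal.ofReal ((1 + ‖x‖ ^ p) / C) ≤ u x ∧
      u x ≤ ENNReal.ofReal (C * (1 + ‖x‖ ^ p)) := by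
  obtain ⟨x₀, hx₀⟩ := hfin
  -- measurability facts
  have hwm : ∀ x : EuclideanSpace ℝ (Fin n),
      Measurable fun y => (ENNReal.ofReal ‖x - y‖) ^ p :=
    fun x => ((measurable_const.sub measurable_id).norm.ennreal_ofReal).pow_const p
  have huq : Measurable fun y => u y ^ (-q) := hu.pow_const (-q)
  have hint : ∀ x : EuclideanSpace ℝ (Fin n),
      Measurable fun y => (ENNReal.ofReal ‖x - y‖) ^ p * u y ^ (-q) :=
    fun x => (hwm x).mul huq
  -- Step A: the set where u is finite has positive measure
  have hS : 0 < volume {y : EuclideanSpace ℝ (Fin n) | u y ≠ ⊤} := by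
    rw [pos_iff_ne_zero]
    intro h0
    have hae : ∀ᵐ y : EuclideanSpace ℝ (Fin n), u y = ⊤ := by
      rw [ae_iff]
      simpa using h0
    have hz : u x₀ = 0 := by
      rw [heq x₀]
      rw [show (0:ℝ≥0∞) = ∫⁻ y : EuclideanSpace ℝ (Fin n), 0 from (lintegral_zero).symm]
      refine lintegral_congr_ae (hae.mono fun y hy => ?_)
      simp only []
      rw [hy, ENNReal.top_rpow_of_neg (neg_lt_zero.2 hq), mul_zero]
    exact (hupos x₀).ne' hz
  -- Step B: a bounded set of positive measure where u is bounded
  obtain ⟨k, hk1, hkpos⟩ :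
      ∃ k : ℕ, 1 ≤ k ∧
        0 < volume {y : EuclideanSpace ℝ (Fin n) | u y ≤ k ∧ ‖y‖ < k} := by
    have hsub : {y : EuclideanSpace ℝ (Fin n) | u y ≠ ⊤} ⊆
        ⋃ k : ℕ, {y | u y ≤ k ∧ ‖y‖ < k} := by
      intro y hy
      obtain ⟨m, hm⟩ := ENNReal.exists_nat_gt hy
      obtain ⟨m', hm'⟩ := exists_nat_gt ‖y‖
      refine Set.mem_iUnion.2 ⟨m + m', ⟨?_, ?_⟩⟩
      · exact le_trans hm.le (by exact_mod_cast Nat.cast_le.2 (Nat.le_add_right m m'))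
      · exact lt_of_lt_of_le hm' (by exact_mod_cast Nat.le_add_left m' m)
    have hex : ∃ k : ℕ, 0 < volume {y : EuclideanSpace ℝ (Fin n) | u y ≤ k ∧ ‖y‖ < k} := by
      by_contra h
      push_neg at h
      have h' : ∀ k : ℕ, volume {y : EuclideanSpace ℝ (Fin n) | u y ≤ k ∧ ‖y‖ < k} = 0 :=
        fun k => le_antisymm (h k) zero_le
      exact hS.ne' (measure_mono_null hsub (measure_iUnion_null h'))
    obtain ⟨k, hk⟩ := hex
    refine ⟨k + 1, le_add_self, lt_of_lt_of_le hk (measure_mono fun y hy => ?_)⟩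
    constructor
    · exact le_trans hy.1 (by exact_mod_cast Nat.cast_le.2 (Nat.le_succ k))
    · exact lt_of_lt_of_le hy.2 (by exact_mod_cast Nat.le_succ k)
  set A : Set (EuclideanSpace ℝ (Fin n)) := {y | u y ≤ k ∧ ‖y‖ < k} with hAdef
  have hAmeas : MeasurableSet A :=
    (hu measurableSet_Iic).inter (measurableSet_lt measurable_norm measurable_const)
  have hAsub : ∀ y ∈ A, u y ≤ k ∧ ‖y‖ < k := fun y hy => hy
  set a := volume A with hadef
  have ha0 : 0 < a := hkpos
  have hatop : a < ⊤ := by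
    refine lt_of_le_of_lt (measure_mono ?_)
      (measure_ball_lt_top (x := (0:EuclideanSpace ℝ (Fin n))) (r := k))
    intro y hy
    exact mem_ball_zero_iff.2 hy.2
  have ha2 : a / 2 ≠ 0 := (ENNReal.div_pos ha0.ne' ofNat_ne_top).ne'
  have ha2top : a / 2 ≠ ⊤ := (ENNReal.div_lt_top hatop.ne two_ne_zero).ne
  -- Step C: small radius
  obtain ⟨t, ht0, ht1, hAdiff⟩ :
      ∃ t : ℝ, 0 < t ∧ t ≤ 1 ∧ ∀ y, a / 2 ≤ volume (A \ ball y t) := by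
    set c := volume (ball (0 : EuclideanSpace ℝ (Fin n)) 1) with hcdef
    have hc0 : 0 < c := measure_ball_pos _ _ one_pos
    have hctop : c < ⊤ := measure_ball_lt_top
    have h2 : a / 2 / c ≠ 0 := (ENNReal.div_pos ha2 hctop.ne).ne'
    have h3 : a / 2 / c ≠ ⊤ := (ENNReal.div_lt_top ha2top hc0.ne').ne
    set t := min 1 ((a / 2 / c).toReal) with htdef
    have ht0 : 0 < t := lt_min one_pos (ENNReal.toReal_pos h2 h3)
    have ht1 : t ≤ 1 := min_le_left _ _
    haveI : Nontrivial (EuclideanSpace ℝ (Fin n)) := by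
      have : Module.finrank ℝ (EuclideanSpace ℝ (Fin n)) = n := finrank_euclideanSpace_fin
      exact Module.nontrivial_of_finrank_pos (R := ℝ) (by omega)
    refine ⟨t, ht0, ht1, fun y => ?_⟩
    have hballr : volume (ball y t) ≤ a / 2 := by
      rw [Measure.addHaar_ball volume y ht0.le, finrank_euclideanSpace_fin]
      calc ENNReal.ofReal (t ^ n) * c ≤ (a / 2 / c) * c := by
            refine mul_le_mul_left ?_ c
            calc ENNReal.ofReal (t ^ n) ≤ ENNReal.ofReal ((a / 2 / c).toReal) := by
                  refine ENNReal.ofReal_le_ofReal ?_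
                  calc t ^ n ≤ t := pow_le_of_le_one ht0.le ht1 (by omega)
                    _ ≤ _ := min_le_right _ _
              _ = a / 2 / c := ENNReal.ofReal_toReal h3
        _ = a / 2 := ENNReal.div_mul_cancel hc0.ne' hctop.ne
    have h4 : a ≤ a / 2 + volume (A \ ball y t) := by
      calc a = volume (A ∩ ball y t) + volume (A \ ball y t) := by
            rw [hadef, measure_inter_add_diff _ measurableSet_ball]
        _ ≤ a / 2 + volume (A \ ball y t) :=
            add_le_add_left (le_trans (measure_mono Set.inter_subset_right) hballr) _
    have h5 : a / 2 + a / 2 ≤ a / 2 + volume (A \ ball y t) := by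
      rw [ENNReal.add_halves]; exact h4
    exact (ENNReal.add_le_add_iff_left ha2top).1 h5
  -- Step D
  have hintA : ∀ y, ENNReal.ofReal (t ^ p) * (a / 2)
      ≤ ∫⁻ z in A, (ENNReal.ofReal ‖y - z‖) ^ p := by
    intro y
    calc ENNReal.ofReal (t ^ p) * (a / 2)
        ≤ ENNReal.ofReal (t ^ p) * volume (A \ ball y t) := mul_le_mul_right (hAdiff y) _
      _ = ∫⁻ _ in A \ ball y t, ENNReal.ofReal (t ^ p) := (setLIntegral_const _ _).symm
      _ ≤ ∫⁻ z in A \ ball y t, (ENNReal.ofReal ‖y - z‖) ^ p := by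
          refine setLIntegral_mono (hwm y) fun z hz => ?_
          have hdz : t ≤ ‖y - z‖ := by
            have h1 : z ∉ ball y t := hz.2
            rw [mem_ball, dist_eq_norm] at h1
            rw [norm_sub_rev]
            linarith [not_lt.1 h1]
          calc ENNReal.ofReal (t ^ p) = (ENNReal.ofReal t) ^ p :=
                (ENNReal.ofReal_rpow_of_pos ht0).symm
            _ ≤ _ := ENNReal.rpow_le_rpow (ENNReal.ofReal_le_ofReal hdz) hp.le
      _ ≤ ∫⁻ z in A, (ENNReal.ofReal ‖y - z‖) ^ p := lintegral_mono_set Set.diff_subset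
  -- Step E
  have hlow : ∀ y, (k : ℝ≥0∞) ^ (-q) * ∫⁻ z in A, (ENNReal.ofReal ‖y - z‖) ^ p ≤ u y := by
    intro y
    have hMq : ∀ z ∈ A, ((k : ℝ≥0∞)) ^ (-q) ≤ u z ^ (-q) := by
      intro z hz
      rw [ENNReal.rpow_neg, ENNReal.rpow_neg]
      exact ENNReal.inv_le_inv.2 (ENNReal.rpow_le_rpow (hAsub z hz).1 hq.le)
    rw [heq y]
    calc (k : ℝ≥0∞) ^ (-q) * ∫⁻ z in A, (ENNReal.ofReal ‖y - z‖) ^ p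
        = ∫⁻ z in A, (ENNReal.ofReal ‖y - z‖) ^ p * (k : ℝ≥0∞) ^ (-q) := by
          rw [lintegral_mul_const _ (hwm y), mul_comm]
      _ ≤ ∫⁻ z in A, (ENNReal.ofReal ‖y - z‖) ^ p * u z ^ (-q) :=
          setLIntegral_mono (hint y) fun z hz => mul_le_mul_right (hMq z hz) _
      _ ≤ ∫⁻ z, (ENNReal.ofReal ‖y - z‖) ^ p * u z ^ (-q) := setLIntegral_le_lintegral _ _
  have hkq0 : (0:ℝ≥0∞) < (k : ℝ≥0∞) ^ (-q) :=
    ENNReal.rpow_pos (by exact_mod_cast Nat.pos_of_ne_zero (by omega)) (natCast_ne_top k)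
  have hkqtop : (k : ℝ≥0∞) ^ (-q) ≠ ⊤ := by
    rw [ENNReal.rpow_neg]
    exact ENNReal.inv_ne_top.2 (ENNReal.rpow_pos
      (by exact_mod_cast Nat.pos_of_ne_zero (by omega)) (natCast_ne_top k)).ne'
  set ε₀ : ℝ≥0∞ := (k : ℝ≥0∞) ^ (-q) * (ENNReal.ofReal (t ^ p) * (a / 2)) with hε₀def
  have hglb : ∀ y, ε₀ ≤ u y := fun y =>
    le_trans (mul_le_mul_right (hintA y) _) (hlow y)
  have htp0 : ENNReal.ofReal (t ^ p) ≠ 0 :=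
    (ENNReal.ofReal_pos.2 (Real.rpow_pos_of_pos ht0 p)).ne'
  have hε₀0 : 0 < ε₀ := by
    rw [hε₀def]
    exact ENNReal.mul_pos hkq0.ne' (ENNReal.mul_pos htp0 ha2).ne'
  have hε₀top : ε₀ ≠ ⊤ := by
    rw [hε₀def]
    exact ENNReal.mul_ne_top hkqtop (ENNReal.mul_ne_top ENNReal.ofReal_ne_top ha2top)
  -- Step F
  have hfar : ∀ y : EuclideanSpace ℝ (Fin n), 2 * (k:ℝ) ≤ ‖y‖ →
      ENNReal.ofReal ((‖y‖ / 2) ^ p) * ((k : ℝ≥0∞) ^ (-q) * a) ≤ u y := by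
    intro y hy
    have h1 : ∀ z ∈ A, ENNReal.ofReal ((‖y‖ / 2) ^ p) ≤ (ENNReal.ofReal ‖y - z‖) ^ p := by
      intro z hz
      have hz2 : ‖z‖ < k := (hAsub z hz).2
      have hd : ‖y‖ / 2 ≤ ‖y - z‖ := by
        have h2 := norm_sub_norm_le y z
        linarith
      rw [← ENNReal.ofReal_rpow_of_nonneg (by positivity) hp.le]
      exact ENNReal.rpow_le_rpow (ENNReal.ofReal_le_ofReal hd) hp.le
    calc ENNReal.ofReal ((‖y‖ / 2) ^ p) * ((k : ℝ≥0∞) ^ (-q) * a)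
        = (k : ℝ≥0∞) ^ (-q) * (ENNReal.ofReal ((‖y‖ / 2) ^ p) * a) := by ring
      _ ≤ (k : ℝ≥0∞) ^ (-q) * ∫⁻ z in A, (ENNReal.ofReal ‖y - z‖) ^ p := by
          refine mul_le_mul_right ?_ _
          calc ENNReal.ofReal ((‖y‖ / 2) ^ p) * a
              = ∫⁻ _ in A, ENNReal.ofReal ((‖y‖ / 2) ^ p) := by
                rw [setLIntegral_const, hadef]
            _ ≤ _ := setLIntegral_mono (hwm y) h1
      _ ≤ u y := hlow y
  -- Step G
  have hI : (∫⁻ y, u y ^ (-q)) < ⊤ := by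
    have hball : MeasurableSet (ball x₀ 1) := measurableSet_ball
    have hεq : ε₀ ^ (-q) ≠ ⊤ := by
      rw [ENNReal.rpow_neg]
      exact ENNReal.inv_ne_top.2 (ENNReal.rpow_pos hε₀0 hε₀top).ne'
    have hb1 : ∫⁻ y in ball x₀ 1, u y ^ (-q) ≤ ε₀ ^ (-q) * volume (ball x₀ 1) := by
      calc ∫⁻ y in ball x₀ 1, u y ^ (-q) ≤ ∫⁻ _ in ball x₀ 1, ε₀ ^ (-q) := by
            refine setLIntegral_mono measurable_const fun y _ => ?_
            rw [ENNReal.rpow_neg, ENNReal.rpow_neg]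
            exact ENNReal.inv_le_inv.2 (ENNReal.rpow_le_rpow (hglb y) hq.le)
        _ = ε₀ ^ (-q) * volume (ball x₀ 1) := setLIntegral_const _ _
    have hb2 : ∫⁻ y in (ball x₀ 1)ᶜ, u y ^ (-q) ≤ u x₀ := by
      calc ∫⁻ y in (ball x₀ 1)ᶜ, u y ^ (-q)
          ≤ ∫⁻ y in (ball x₀ 1)ᶜ, (ENNReal.ofReal ‖x₀ - y‖) ^ p * u y ^ (-q) := by
            refine setLIntegral_mono (hint x₀) fun y hy => ?_
            have h1 : (1:ℝ) ≤ ‖x₀ - y‖ := by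
              have hy' := hy
              rw [Set.mem_compl_iff, mem_ball, dist_eq_norm] at hy'
              rw [norm_sub_rev]
              linarith [not_lt.1 hy']
            nth_rewrite 1 [← one_mul (u y ^ (-q))]
            exact mul_le_mul_left (ENNReal.one_le_rpow (ENNReal.one_le_ofReal.2 h1) hp) _
        _ ≤ ∫⁻ y, (ENNReal.ofReal ‖x₀ - y‖) ^ p * u y ^ (-q) := setLIntegral_le_lintegral _ _
        _ = u x₀ := (heq x₀).symm
    calc (∫⁻ y, u y ^ (-q))
        = (∫⁻ y in ball x₀ 1, u y ^ (-q)) + ∫⁻ y in (ball x₀ 1)ᶜ, u y ^ (-q) :=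
          (lintegral_add_compl _ hball).symm
      _ ≤ ε₀ ^ (-q) * volume (ball x₀ 1) + u x₀ := add_le_add hb1 hb2
      _ < ⊤ := by
          refine ENNReal.add_lt_top.2 ⟨?_, hx₀.lt_top⟩
          exact ENNReal.mul_lt_top hεq.lt_top measure_ball_lt_top
  set I : ℝ≥0∞ := ∫⁻ y, u y ^ (-q) with hIdef
  -- Step H
  have hub : ∀ x, u x ≤ 2 ^ p * (ENNReal.ofReal ‖x - x₀‖) ^ p * I + 2 ^ p * u x₀ := by
    intro x
    rw [heq x]
    calc ∫⁻ y, (ENNReal.ofReal ‖x - y‖) ^ p * u y ^ (-q)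
        ≤ ∫⁻ y, (2 ^ p * ((ENNReal.ofReal ‖x - x₀‖) ^ p + (ENNReal.ofReal ‖x₀ - y‖) ^ p))
            * u y ^ (-q) := by
          refine lintegral_mono fun y => mul_le_mul_left ?_ _
          calc (ENNReal.ofReal ‖x - y‖) ^ p
              ≤ (ENNReal.ofReal ‖x - x₀‖ + ENNReal.ofReal ‖x₀ - y‖) ^ p := by
                refine ENNReal.rpow_le_rpow ?_ hp.le
                rw [← ENNReal.ofReal_add (norm_nonneg _) (norm_nonneg _)]
                refine ENNReal.ofReal_le_ofReal ?_
                calc ‖x - y‖ = ‖(x - x₀) + (x₀ - y)‖ := by rw [sub_add_sub_cancel]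
                  _ ≤ ‖x - x₀‖ + ‖x₀ - y‖ := norm_add_le _ _
            _ ≤ _ := aux_ennreal_rpow_add _ _ hp.le
      _ = ∫⁻ y, 2 ^ p * ((ENNReal.ofReal ‖x - x₀‖) ^ p * u y ^ (-q)
            + (ENNReal.ofReal ‖x₀ - y‖) ^ p * u y ^ (-q)) := lintegral_congr fun y => by ring
      _ = 2 ^ p * ((ENNReal.ofReal ‖x - x₀‖) ^ p * I + u x₀) := by
          rw [lintegral_const_mul _ (f := fun y => (ENNReal.ofReal ‖x - x₀‖) ^ p * u y ^ (-q)
                + (ENNReal.ofReal ‖x₀ - y‖) ^ p * u y ^ (-q))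
              ((measurable_const.mul huq).add (hint x₀)),
            lintegral_add_left (f := fun y => (ENNReal.ofReal ‖x - x₀‖) ^ p * u y ^ (-q))
              (measurable_const.mul huq),
            lintegral_const_mul _ huq, ← hIdef, ← heq x₀]
      _ = 2 ^ p * (ENNReal.ofReal ‖x - x₀‖) ^ p * I + 2 ^ p * u x₀ := by ring
  -- Step I: conclude via the final lemma
  exact growth_bounds_final n p q hp hq u k hk1 ε₀ hε₀0 hε₀top hglb
    ((k : ℝ≥0∞) ^ (-q) * a) (ENNReal.mul_pos hkq0.ne' ha0.ne')
    (ENNReal.mul_ne_top hkqtop hatop.ne) hfar I hI.ne x₀ hx₀ hub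
end

section
/- Let n ≥ 1, p > 0, and let u be a positive measurable function on ℝⁿ with u(x) = ∫_{ℝⁿ} |x-y|^p u(y)^{-q} dy and ∫(1+|y|^p)u(y)^{-q} dy < ∞. For x ∈ ℝⁿ, λ > 0, define u_{x,λ}(ξ) = (|ξ-x|/λ)^p u(x + λ²(ξ-x)/|ξ-x|²). Then u_{x,λ}(ξ) = ∫_{ℝⁿ} |ξ-z|^p (λ/|z-x|)^{2n-pq+p} u_{x,λ}(z)^{-q} dz for all ξ ≠ x. -/
open MeasureTheory

open EuclideanGeometry Set
theorem conformal_covariance_negative_exponent (n : ℕ) (hn : 1 ≤ n) (p q : ℝ)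
    (hp : 0 < p) (hq : 0 < q)
    (u : EuclideanSpace ℝ (Fin n) → ℝ) (hu : Measurable u) (hupos : ∀ x, 0 < u x)
    (heq : ∀ x, u x = ∫ y, ‖x - y‖ ^ p * u y ^ (-q))
    (hfin : Integrable (fun y : EuclideanSpace ℝ (Fin n) => (1 + ‖y‖ ^ p) * u y ^ (-q))) :
    ∀ x : EuclideanSpace ℝ (Fin n), ∀ lam : ℝ, 0 < lam → ∀ ξ, ξ ≠ x →
      (‖ξ - x‖ / lam) ^ p * u (x + (lam ^ 2 / ‖ξ - x‖ ^ 2) • (ξ - x)) =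
        ∫ z, ‖ξ - z‖ ^ p * (lam / ‖z - x‖) ^ (2 * (n : ℝ) - p * q + p) *
          ((‖z - x‖ / lam) ^ p * u (x + (lam ^ 2 / ‖z - x‖ ^ 2) • (z - x))) ^ (-q) := by
  intro x lam hlam ξ hξ
  have hlam' : lam ≠ 0 := hlam.ne'
  haveI : Nontrivial (EuclideanSpace ℝ (Fin n)) := by
    refine Module.nontrivial_of_finrank_pos (R := ℝ) ?_
    rw [finrank_euclideanSpace_fin]
    exact hn
  set I : EuclideanSpace ℝ (Fin n) → EuclideanSpace ℝ (Fin n) := inversion x lam with hI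
  have hIdef : ∀ z : EuclideanSpace ℝ (Fin n),
      x + (lam ^ 2 / ‖z - x‖ ^ 2) • (z - x) = I z := by
    intro z
    rw [hI]
    rw [EuclideanGeometry.inversion]
    rw [dist_eq_norm, div_pow, vsub_eq_sub, vadd_eq_add, add_comm]
  have hIne : ∀ z : EuclideanSpace ℝ (Fin n), z ≠ x → I z ≠ x := by
    intro z hz h
    exact hz ((inversion_eq_center hlam').mp h)
  rw [hIdef ξ]
  simp only [hIdef]
  rw [heq (I ξ), ← integral_const_mul]
  set s : Set (EuclideanSpace ℝ (Fin n)) := {x}ᶜ with hs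
  have hms : MeasurableSet s := (measurableSet_singleton x).compl
  have hrestrict : (volume : Measure (EuclideanSpace ℝ (Fin n))).restrict s = volume :=
    MeasureTheory.restrict_compl_singleton x
  rw [← hrestrict]
  have himg : I '' s = s := by
    apply Subset.antisymm
    · rintro _ ⟨z, hz, rfl⟩
      exact hIne z hz
    · intro z hz
      exact ⟨I z, hIne z hz, inversion_inversion x hlam' z⟩
  have hinj : InjOn I s := (inversion_injective x hlam').injOn
  set f' : EuclideanSpace ℝ (Fin n) →
      (EuclideanSpace ℝ (Fin n) →L[ℝ] EuclideanSpace ℝ (Fin n)) :=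
    fun z => ((lam / dist z x) ^ 2) •
      (Submodule.reflection (ℝ ∙ (z - x))ᗮ : EuclideanSpace ℝ (Fin n) →L[ℝ] EuclideanSpace ℝ (Fin n))
    with hf'
  have hder : ∀ z ∈ s, HasFDerivWithinAt I (f' z) s z := fun z hz =>
    (hasFDerivAt_inversion (by simpa [hs] using hz)).hasFDerivWithinAt
  have hdet : ∀ z : EuclideanSpace ℝ (Fin n), z ≠ x →
      |(f' z).det| = (lam / ‖z - x‖) ^ (2 * n) := by
    intro z hz
    have hcoe : ((f' z : EuclideanSpace ℝ (Fin n) →L[ℝ] EuclideanSpace ℝ (Fin n)) :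
        EuclideanSpace ℝ (Fin n) →ₗ[ℝ] EuclideanSpace ℝ (Fin n)) =
        ((lam / dist z x) ^ 2) • (Submodule.reflection (ℝ ∙ (z - x))ᗮ).toLinearMap := rfl
    have hrz : (0:ℝ) < ‖z - x‖ := by
      rw [norm_sub_pos_iff]; exact hz
    rw [ContinuousLinearMap.det, hcoe, LinearMap.det_smul, Submodule.det_reflection,
      finrank_euclideanSpace_fin, abs_mul, abs_pow (-1 : ℝ), abs_neg, abs_one, one_pow,
      mul_one, abs_of_nonneg (pow_nonneg (sq_nonneg _) n), dist_eq_norm, ← pow_mul]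
  -- pointwise identity on s
  have hpt : ∀ z ∈ s,
      |(f' z).det| • ((‖ξ - x‖ / lam) ^ p * (‖I ξ - I z‖ ^ p * u (I z) ^ (-q))) =
      ‖ξ - z‖ ^ p * (lam / ‖z - x‖) ^ (2 * (n : ℝ) - p * q + p) *
        ((‖z - x‖ / lam) ^ p * u (I z)) ^ (-q) := by
    intro z hz
    have hzx : z ≠ x := hz
    have hrz : (0:ℝ) < ‖z - x‖ := by rw [norm_sub_pos_iff]; exact hzx
    have hrξ : (0:ℝ) < ‖ξ - x‖ := by rw [norm_sub_pos_iff]; exact hξ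
    set t : ℝ := lam / ‖z - x‖ with htdef
    have ht : (0:ℝ) < t := div_pos hlam hrz
    have hIdist : ‖I ξ - I z‖ = lam ^ 2 / (‖ξ - x‖ * ‖z - x‖) * ‖ξ - z‖ := by
      have := dist_inversion_inversion hξ hzx lam
      simpa [dist_eq_norm] using this
    have h1 : ‖I ξ - I z‖ ^ p
        = (lam ^ 2 / (‖ξ - x‖ * ‖z - x‖)) ^ p * ‖ξ - z‖ ^ p := by
      rw [hIdist, Real.mul_rpow (by positivity) (by positivity)]
    have h2 : (‖ξ - x‖ / lam) ^ p * (lam ^ 2 / (‖ξ - x‖ * ‖z - x‖)) ^ p = t ^ p := by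
      rw [← Real.mul_rpow (by positivity) (by positivity), htdef]
      congr 1
      field_simp
    have h3 : ((‖z - x‖ / lam) ^ p * u (I z)) ^ (-q)
        = t ^ (p * q) * u (I z) ^ (-q) := by
      rw [Real.mul_rpow (by positivity) (hupos _).le, ← Real.rpow_mul (by positivity)]
      have htinv : ‖z - x‖ / lam = t⁻¹ := (inv_div lam ‖z - x‖).symm
      rw [htinv, Real.inv_rpow ht.le, ← Real.rpow_neg ht.le,
        show -(p * -q) = p * q by ring]
    have h4 : t ^ (2 * (n : ℝ) - p * q + p)
        = t ^ (2 * n) * (t ^ (p * q))⁻¹ * t ^ p := by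
      rw [show (2 * (n : ℝ) - p * q + p) = ((2 * n : ℕ) : ℝ) + (-(p * q)) + p by
        push_cast; ring]
      rw [Real.rpow_add ht, Real.rpow_add ht, Real.rpow_natCast,
        Real.rpow_neg ht.le]
    rw [smul_eq_mul, hdet z hzx, h1, h3, h4, ← htdef]
    have hne : t ^ (p * q) ≠ 0 := (Real.rpow_pos_of_pos ht _).ne'
    have h5 : (t ^ (p * q))⁻¹ * t ^ (p * q) = 1 := inv_mul_cancel₀ hne
    linear_combination (t ^ (2 * n) * ‖ξ - z‖ ^ p * u (I z) ^ (-q)) * h2 -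
      (t ^ (2 * n) * ‖ξ - z‖ ^ p * u (I z) ^ (-q) * t ^ p) * h5
  calc
    ∫ y in s, (‖ξ - x‖ / lam) ^ p * (‖I ξ - y‖ ^ p * u y ^ (-q))
        = ∫ y in I '' s, (‖ξ - x‖ / lam) ^ p * (‖I ξ - y‖ ^ p * u y ^ (-q)) := by
          rw [himg]
    _ = ∫ z in s, |(f' z).det| •
          ((‖ξ - x‖ / lam) ^ p * (‖I ξ - I z‖ ^ p * u (I z) ^ (-q))) :=
        integral_image_eq_integral_abs_det_fderiv_smul volume hms hder hinj _
    _ = ∫ z in s, ‖ξ - z‖ ^ p * (lam / ‖z - x‖) ^ (2 * (n : ℝ) - p * q + p) *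
          ((‖z - x‖ / lam) ^ p * u (I z)) ^ (-q) :=
        setIntegral_congr_fun hms hpt
end

section
/- Let n ≥ 1, p > 0, and let u ∈ C¹(ℝⁿ) be positive and satisfy u(x) ≤ C(1+|x|^p) and u(x) ≥ (1+|x|^p)/C for some C ≥ 1. Then for each x ∈ ℝⁿ there is λ₀ > 0 such that for all 0 < λ < λ₀ and |y-x| ≥ λ, (|y-x|/λ)^p u(x + λ²(y-x)/|y-x|²) ≥ u(y). -/
open Real

set_option maxHeartbeats 1000000 in
theorem moving_sphere_start_negative (n : ℕ) (hn : 1 ≤ n) (p : ℝ) (hp : 0 < p)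
    (u : EuclideanSpace ℝ (Fin n) → ℝ) (hu : ContDiff ℝ 1 u) (hupos : ∀ x, 0 < u x)
    (C : ℝ) (hC : 1 ≤ C)
    (hub : ∀ x, u x ≤ C * (1 + ‖x‖ ^ p)) (hlb : ∀ x, (1 + ‖x‖ ^ p) / C ≤ u x) :
    ∀ x : EuclideanSpace ℝ (Fin n), ∃ lam₀ > (0 : ℝ),
      ∀ lam : ℝ, 0 < lam → lam < lam₀ → ∀ y, lam ≤ ‖y - x‖ →
        u y ≤ (‖y - x‖ / lam) ^ p * u (x + (lam ^ 2 / ‖y - x‖ ^ 2) • (y - x)) := by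
  intro x
  have hC0 : 0 < C := lt_of_lt_of_le one_pos hC
  -- minimum of u on the closed unit ball around x
  have hballne : (Metric.closedBall x 1).Nonempty := ⟨x, Metric.mem_closedBall_self zero_le_one⟩
  obtain ⟨z₀, hz₀, hmin⟩ := (isCompact_closedBall x 1).exists_isMinOn hballne
    hu.continuous.continuousOn
  set m := u z₀ with hm_def
  have hm : 0 < m := hupos z₀
  -- bound for the derivative on the ball
  obtain ⟨L, hL⟩ := (isCompact_closedBall x 1).exists_bound_of_continuousOn
    (hu.continuous_fderiv one_ne_zero).continuousOn
  have hL0 : 0 ≤ L := le_trans (norm_nonneg _) (hL x (Metric.mem_closedBall_self zero_le_one))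
  set q := min p 1 with hq_def
  have hq0 : 0 < q := lt_min hp one_pos
  have hq1 : q ≤ 1 := min_le_right _ _
  have hqp : q ≤ p := min_le_left _ _
  set K := C * (1 + (‖x‖ + 1) ^ p) with hK_def
  have hK : 0 < K := by
    have : (0:ℝ) < (‖x‖ + 1) ^ p := Real.rpow_pos_of_pos (by positivity) p
    positivity
  have hA : (0:ℝ) < (m / K) ^ (1/p) := Real.rpow_pos_of_pos (div_pos hm hK) _
  have hB : (0:ℝ) < (m * q / (2*L + 2)) ^ (1/q) :=
    Real.rpow_pos_of_pos (div_pos (by positivity) (by positivity)) _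
  refine ⟨min 1 (min ((m / K) ^ (1/p)) ((m * q / (2*L + 2)) ^ (1/q))), by positivity, ?_⟩
  intro lam hlam hlamlt y hr
  set r := ‖y - x‖ with hr_def
  have hr0 : 0 < r := lt_of_lt_of_le hlam hr
  have hlam1 : lam ≤ 1 := le_of_lt (lt_of_lt_of_le hlamlt (min_le_left _ _))
  have hlamA : lam < (m / K) ^ (1/p) :=
    lt_of_lt_of_le hlamlt (le_trans (min_le_right _ _) (min_le_left _ _))
  have hlamB : lam < (m * q / (2*L + 2)) ^ (1/q) :=
    lt_of_lt_of_le hlamlt (le_trans (min_le_right _ _) (min_le_right _ _))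
  have hpP : lam ^ p < m / K := by
    have h1 := Real.rpow_lt_rpow hlam.le hlamA hp
    rwa [← Real.rpow_mul (div_pos hm hK).le, one_div, inv_mul_cancel₀ hp.ne',
      Real.rpow_one] at h1
  have hqP : lam ^ q < m * q / (2*L + 2) := by
    have h1 := Real.rpow_lt_rpow hlam.le hlamB hq0
    rwa [← Real.rpow_mul (by positivity), one_div, inv_mul_cancel₀ hq0.ne',
      Real.rpow_one] at h1
  set z := x + (lam ^ 2 / r ^ 2) • (y - x) with hz_def
  have hzx : ‖z - x‖ = lam ^ 2 / r := by
    rw [hz_def, add_sub_cancel_left, norm_smul, Real.norm_eq_abs,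
      abs_of_nonneg (by positivity), ← hr_def]
    field_simp
  have hz1 : z ∈ Metric.closedBall x 1 := by
    rw [Metric.mem_closedBall, dist_eq_norm, hzx]
    have h1 : lam ^ 2 / r ≤ lam := by
      rw [div_le_iff₀ hr0]
      nlinarith only [hr, hlam]
    linarith
  have hmz : m ≤ u z := hmin hz1
  have huz : 0 < u z := hupos z
  rcases le_or_gt r 1 with hr1 | hr1
  · -- near region: both points in the ball, use Lipschitz estimate
    have hy1 : y ∈ Metric.closedBall x 1 := by
      rw [Metric.mem_closedBall, dist_eq_norm, ← hr_def]; exact hr1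
    have hlip : u y - u z ≤ L * (r - lam ^ 2 / r) := by
      have hdiff : ∀ w ∈ Metric.closedBall x 1, DifferentiableAt ℝ u w :=
        fun w _ => (hu.differentiable one_ne_zero).differentiableAt
      have h1 := (convex_closedBall x 1).norm_image_sub_le_of_norm_fderiv_le hdiff hL hz1 hy1
      have h2 : y - z = (1 - lam ^ 2 / r ^ 2) • (y - x) := by
        rw [hz_def]; module
      have h3 : ‖y - z‖ = r - lam ^ 2 / r := by
        rw [h2, norm_smul, Real.norm_eq_abs, abs_of_nonneg, ← hr_def]
        · field_simp
        · have : lam ^ 2 ≤ r ^ 2 := by nlinarith only [hr, hlam]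
          have : lam ^ 2 / r ^ 2 ≤ 1 := by
            rw [div_le_one (by positivity)]; exact this
          linarith
      rw [h3] at h1
      calc u y - u z ≤ ‖u y - u z‖ := le_norm_self _
        _ ≤ L * (r - lam ^ 2 / r) := h1
    set t := r / lam with ht_def
    have ht0 : 0 < t := div_pos hr0 hlam
    have ht1 : 1 ≤ t := (one_le_div hlam).2 hr
    have hrt : r = lam * t := by rw [ht_def]; field_simp
    set a := t ^ p with ha_def
    set b := t ^ q with hb_def
    set c := t ^ (1 - q) with hc_def
    set d := lam ^ q with hd_def
    set e := lam ^ (1 - q) with he_def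
    have hb0 : 0 < b := Real.rpow_pos_of_pos ht0 _
    have hc0 : 0 < c := Real.rpow_pos_of_pos ht0 _
    have hd0 : 0 < d := Real.rpow_pos_of_pos hlam _
    have he0 : 0 < e := Real.rpow_pos_of_pos hlam _
    have hba : b ≤ a := Real.rpow_le_rpow_of_exponent_le ht1 hqp
    have hb1 : 1 ≤ b := Real.one_le_rpow ht1 hq0.le
    have hbc : b * c = t := by
      rw [hb_def, hc_def, ← Real.rpow_add ht0]
      norm_num
    have hde : d * e = lam := by
      rw [hd_def, he_def, ← Real.rpow_add hlam]
      norm_num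
    have hce : c * e ≤ 1 := by
      rw [hc_def, he_def, ← Real.mul_rpow ht0.le hlam.le, mul_comm t lam, ← hrt]
      exact Real.rpow_le_one hr0.le hr1 (by linarith)
    -- Bernoulli inequality
    have hBern : t ≤ b * t + q * b - q * b * t := by
      have hs : (-1:ℝ) ≤ t⁻¹ - 1 := by
        have : (0:ℝ) < t⁻¹ := inv_pos.2 ht0
        linarith
      have hB1 := rpow_one_add_le_one_add_mul_self hs hq0.le hq1
      rw [add_sub_cancel, Real.inv_rpow ht0.le, ← hb_def] at hB1
      have hB2 : b⁻¹ * (b * t) ≤ (1 + q * (t⁻¹ - 1)) * (b * t) :=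
        mul_le_mul_of_nonneg_right hB1 (by positivity)
      have hB3 : b⁻¹ * (b * t) = t := by field_simp
      have hB4 : (1 + q * (t⁻¹ - 1)) * (b * t) = b * t + q * b - q * b * t := by
        field_simp
        ring
      rw [hB3, hB4] at hB2
      exact hB2
    have h5 : q * b * (t - 1) ≤ (b - 1) * t := by linarith only [hBern]
    have h6 : e * t ≤ b := by
      calc e * t = b * (c * e) := by rw [← hbc]; ring
        _ ≤ b * 1 := mul_le_mul_of_nonneg_left hce hb0.le
        _ = b := mul_one b
    have h2Ld : 2 * L * d ≤ m * q := by
      have h1 := (lt_div_iff₀ (by positivity : (0:ℝ) < 2 * L + 2)).1 hqP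
      linarith only [h1, hd0]
    have key2 : L * lam * (t ^ 2 - 1) ≤ (a - 1) * u z * t := by
      have step1 : L * lam * (t ^ 2 - 1) ≤ 2 * L * d * (e * t * (t - 1)) := by
        rw [← hde]
        linarith only [mul_nonneg (mul_nonneg (mul_nonneg hL0 hd0.le) he0.le) (sq_nonneg (t - 1))]
      have step2 : 2 * L * d * (e * t * (t - 1)) ≤ m * q * (e * t * (t - 1)) :=
        mul_le_mul_of_nonneg_right h2Ld (mul_nonneg (mul_nonneg he0.le ht0.le) (by linarith only [ht1]))
      have step3 : m * q * (e * t * (t - 1)) ≤ m * q * (b * (t - 1)) := by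
        apply mul_le_mul_of_nonneg_left _ (by positivity)
        exact mul_le_mul_of_nonneg_right h6 (by linarith)
      have step4 : m * q * (b * (t - 1)) ≤ m * ((b - 1) * t) := by
        have h5m := mul_le_mul_of_nonneg_left h5 hm.le
        linarith only [h5m]
      have step5 : m * ((b - 1) * t) ≤ (a - 1) * u z * t := by
        have h7 : (b - 1) * m ≤ (a - 1) * u z := by
          have f1 := mul_nonneg (sub_nonneg.2 hba) huz.le
          have f2 := mul_nonneg (sub_nonneg.2 hb1) (sub_nonneg.2 hmz)
          linarith only [f1, f2]
        have h7t := mul_le_mul_of_nonneg_right h7 ht0.le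
        linarith only [h7t]
      linarith
    have key : L * (r - lam ^ 2 / r) ≤ (a - 1) * u z := by
      have hrr : r - lam ^ 2 / r = L⁻¹ * 0 + lam * (t ^ 2 - 1) / t := by
        rw [hrt]
        field_simp
        ring
      have h8 : L * (lam * (t ^ 2 - 1) / t) ≤ (a - 1) * u z := by
        rw [mul_div_assoc' L, div_le_iff₀ ht0]
        calc L * (lam * (t ^ 2 - 1)) = L * lam * (t ^ 2 - 1) := by ring
          _ ≤ (a - 1) * u z * t := key2
      have hrr2 : r - lam ^ 2 / r = lam * (t ^ 2 - 1) / t := by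
        rw [hrt]; field_simp
      rw [hrr2]
      exact h8
    have : u y ≤ u z + (a - 1) * u z := by linarith
    have hfin : u y ≤ a * u z := by linarith [this]
    calc u y ≤ a * u z := hfin
      _ = (r / lam) ^ p * u z := by rw [ha_def, ht_def]
  · -- far region: use growth bounds
    have hyb : ‖y‖ ≤ (‖x‖ + 1) * r := by
      have h1 : ‖y‖ ≤ ‖x‖ + r := by
        calc ‖y‖ = ‖x + (y - x)‖ := by rw [add_sub_cancel]
          _ ≤ ‖x‖ + ‖y - x‖ := norm_add_le _ _
      have h2 : ‖x‖ * 1 ≤ ‖x‖ * r := mul_le_mul_of_nonneg_left hr1.le (norm_nonneg x)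
      linarith only [h1, h2]
    have hyp : ‖y‖ ^ p ≤ (‖x‖ + 1) ^ p * r ^ p := by
      calc ‖y‖ ^ p ≤ ((‖x‖ + 1) * r) ^ p := Real.rpow_le_rpow (norm_nonneg y) hyb hp.le
        _ = (‖x‖ + 1) ^ p * r ^ p := Real.mul_rpow (by positivity) hr0.le
    have h1r : (1:ℝ) ≤ r ^ p := Real.one_le_rpow hr1.le hp.le
    have hyK : u y ≤ K * r ^ p := by
      have := hub y
      have h2 : C * (1 + ‖y‖ ^ p) ≤ C * (r ^ p + (‖x‖ + 1) ^ p * r ^ p) := by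
        apply mul_le_mul_of_nonneg_left _ hC0.le
        linarith
      calc u y ≤ C * (1 + ‖y‖ ^ p) := hub y
        _ ≤ C * (r ^ p + (‖x‖ + 1) ^ p * r ^ p) := h2
        _ = K * r ^ p := by rw [hK_def]; ring
    have h8 : K * lam ^ p ≤ m := by
      have := (lt_div_iff₀ hK).1 hpP
      linarith
    have hlp : 0 < lam ^ p := Real.rpow_pos_of_pos hlam p
    have hrp : 0 < r ^ p := Real.rpow_pos_of_pos hr0 p
    calc u y ≤ K * r ^ p := hyK
      _ ≤ (r / lam) ^ p * u z := by
        rw [Real.div_rpow hr0.le hlam.le, div_mul_eq_mul_div, le_div_iff₀ hlp]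
        have h9 : K * lam ^ p ≤ u z := le_trans h8 hmz
        calc K * r ^ p * lam ^ p = (K * lam ^ p) * r ^ p := by ring
          _ ≤ u z * r ^ p := mul_le_mul_of_nonneg_right h9 hrp.le
          _ = r ^ p * u z := by ring
end

section
/- Let n ≥ 1, 0 < α < n, λ̄ > 0. For λ̄ ≤ λ ≤ |y| ≤ λ̄ + 1 and λ̄ + 2 ≤ |z| ≤ λ̄ + 3, the kernel K(0,λ;y,z) = |y-z|^{α-n} - (λ/|y|)^{n-α}|y^λ - z|^{α-n} (with y^λ = λ²y/|y|²) vanishes at |y| = λ, and its radial derivative there satisfies ∇_y K(0,λ;y,z)·y |_{|y|=λ} = (n-α)|y-z|^{α-n-2}(|z|² - |y|²) > 0. -/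
theorem kernel_boundary_derivative (n : ℕ) (hn : 1 ≤ n) (α : ℝ) (hα0 : 0 < α)
    (hαn : α < n) (lb lam : ℝ) (hlb : 0 < lb)
    (y z : EuclideanSpace ℝ (Fin n))
    (hlam : lb ≤ lam) (hy : ‖y‖ = lam) (hy1 : ‖y‖ ≤ lb + 1)
    (hz2 : lb + 2 ≤ ‖z‖) (hz3 : ‖z‖ ≤ lb + 3) :
    (‖y - z‖ ^ (α - (n : ℝ)) -
        (lam / ‖y‖) ^ ((n : ℝ) - α) * ‖(lam ^ 2 / ‖y‖ ^ 2) • y - z‖ ^ (α - (n : ℝ)) = 0) ∧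
    deriv (fun t : ℝ =>
        ‖t • y - z‖ ^ (α - (n : ℝ)) -
          (lam / ‖t • y‖) ^ ((n : ℝ) - α) *
            ‖(lam ^ 2 / ‖t • y‖ ^ 2) • (t • y) - z‖ ^ (α - (n : ℝ))) 1 =
      ((n : ℝ) - α) * ‖y - z‖ ^ (α - (n : ℝ) - 2) * (‖z‖ ^ 2 - ‖y‖ ^ 2) ∧
    0 < ((n : ℝ) - α) * ‖y - z‖ ^ (α - (n : ℝ) - 2) * (‖z‖ ^ 2 - ‖y‖ ^ 2) := by
  have hlam0 : 0 < lam := lt_of_lt_of_le hlb hlam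
  set β : ℝ := α - (n : ℝ) with hβ
  set a : ℝ := ‖y‖ ^ 2 with ha
  set b : ℝ := (inner ℝ y z : ℝ) with hb
  set c : ℝ := ‖z‖ ^ 2 with hc
  have hyz : 0 < ‖y - z‖ := by
    have h1 : ‖z‖ - ‖y‖ ≤ ‖z - y‖ := norm_sub_norm_le z y
    have h2 : ‖z - y‖ = ‖y - z‖ := norm_sub_rev z y
    linarith
  have hD : (0 : ℝ) < a - 2 * b + c := by
    have := norm_sub_sq_real y z
    nlinarith
  have hDeq : ‖y - z‖ ^ 2 = a - 2 * b + c := norm_sub_sq_real y z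
  -- helper: ‖s • y - z‖ ^ β as a rpow of a quadratic in s
  have key : ∀ s : ℝ, ‖s • y - z‖ ^ β = (s ^ 2 * a - 2 * s * b + c) ^ (β / 2) := by
    intro s
    have h2 : ‖s • y - z‖ ^ 2 = s ^ 2 * a - 2 * s * b + c := by
      rw [norm_sub_sq_real, norm_smul, real_inner_smul_left, Real.norm_eq_abs, mul_pow, sq_abs]
      ring
    rw [← h2, ← Real.rpow_natCast (‖s • y - z‖) 2, ← Real.rpow_mul (norm_nonneg _)]
    congr 1
    push_cast
    ring
  refine ⟨?_, ?_, ?_⟩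
  · have h1 : lam / ‖y‖ = 1 := by rw [hy]; field_simp
    have h2 : lam ^ 2 / ‖y‖ ^ 2 = 1 := by rw [hy]; field_simp
    rw [h1, h2, one_smul, Real.one_rpow, one_mul, sub_self]
  · -- the derivative computation
    have heq : (fun t : ℝ =>
        ‖t • y - z‖ ^ β -
          (lam / ‖t • y‖) ^ ((n : ℝ) - α) *
            ‖(lam ^ 2 / ‖t • y‖ ^ 2) • (t • y) - z‖ ^ β) =ᶠ[nhds 1]
        (fun t : ℝ =>
          (t ^ 2 * a - 2 * t * b + c) ^ (β / 2) -
            t ^ β * ((t⁻¹) ^ 2 * a - 2 * t⁻¹ * b + c) ^ (β / 2)) := by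
      filter_upwards [Ioi_mem_nhds (zero_lt_one)] with t ht
      have ht0 : (t : ℝ) ≠ 0 := ne_of_gt ht
      have hnorm : ‖t • y‖ = t * lam := by
        rw [norm_smul, Real.norm_eq_abs, abs_of_pos ht, hy]
      have h1 : lam / (t * lam) = t⁻¹ := by field_simp [mul_comm]
      have h2 : lam ^ 2 / (t * lam) ^ 2 * t = t⁻¹ := by field_simp
      have h3 : (t⁻¹ : ℝ) ^ ((n : ℝ) - α) = t ^ β := by
        rw [Real.inv_rpow ht.le, ← Real.rpow_neg ht.le, hβ, neg_sub]
      simp only [hnorm, smul_smul, h1, h2, h3, key t, key t⁻¹]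
    rw [Filter.EventuallyEq.deriv_eq heq]
    have hq : HasDerivAt (fun t : ℝ => t ^ 2 * a - 2 * t * b + c) (2 * a - 2 * b) 1 := by
      have h := (((hasDerivAt_pow 2 (1 : ℝ)).mul_const a).sub
        (((hasDerivAt_id (1 : ℝ)).const_mul 2).mul_const b)).add_const c
      exact h.congr_deriv (by norm_num)
    have hinv : HasDerivAt (fun t : ℝ => t⁻¹) (-1) 1 := by
      have h := hasDerivAt_inv (x := (1 : ℝ)) one_ne_zero
      norm_num at h
      exact h
    have hr : HasDerivAt (fun t : ℝ => (t⁻¹) ^ 2 * a - 2 * t⁻¹ * b + c) (-2 * a + 2 * b) 1 := by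
      have h := (((hinv.pow 2).mul_const a).sub ((hinv.const_mul 2).mul_const b)).add_const c
      exact h.congr_deriv (by norm_num)
    have hq1 : (1 : ℝ) ^ 2 * a - 2 * 1 * b + c = a - 2 * b + c := by norm_num
    have hr1 : ((1 : ℝ)⁻¹) ^ 2 * a - 2 * (1 : ℝ)⁻¹ * b + c = a - 2 * b + c := by norm_num
    have hQ : HasDerivAt (fun t : ℝ => (t ^ 2 * a - 2 * t * b + c) ^ (β / 2))
        ((2 * a - 2 * b) * (β / 2) * (a - 2 * b + c) ^ (β / 2 - 1)) 1 := by
      have h := hq.rpow_const (p := β / 2) (Or.inl (by rw [hq1]; exact hD.ne'))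
      rw [hq1] at h
      exact h
    have hR : HasDerivAt (fun t : ℝ => ((t⁻¹) ^ 2 * a - 2 * t⁻¹ * b + c) ^ (β / 2))
        ((-2 * a + 2 * b) * (β / 2) * (a - 2 * b + c) ^ (β / 2 - 1)) 1 := by
      have h := hr.rpow_const (p := β / 2) (Or.inl (by rw [hr1]; exact hD.ne'))
      rw [hr1] at h
      exact h
    have hT : HasDerivAt (fun t : ℝ => t ^ β) β 1 := by
      have h := Real.hasDerivAt_rpow_const (x := (1 : ℝ)) (p := β) (Or.inl one_ne_zero)
      simpa using h
    have hG := hQ.sub (hT.mul hR)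
    refine hG.deriv.trans ?_
    have h1β : (1 : ℝ) ^ β = 1 := Real.one_rpow β
    have hE : ‖y - z‖ ^ (β - 2) = (a - 2 * b + c) ^ (β / 2 - 1) := by
      rw [← hDeq, ← Real.rpow_natCast (‖y - z‖) 2, ← Real.rpow_mul (norm_nonneg _)]
      congr 1
      push_cast
      ring
    have hsplit : (a - 2 * b + c) ^ (β / 2) =
        (a - 2 * b + c) ^ (β / 2 - 1) * (a - 2 * b + c) := by
      rw [← Real.rpow_add_one hD.ne']
      congr 1
      ring
    rw [hr1, h1β, hE, hsplit, hβ]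
    ring
  · have hzy : ‖y‖ < ‖z‖ := by linarith
    have hpos : (0 : ℝ) < ‖z‖ ^ 2 - ‖y‖ ^ 2 := by nlinarith [norm_nonneg y]
    exact mul_pos (mul_pos (by linarith) (Real.rpow_pos_of_pos hyz _)) hpos
end

section
/- Let n ≥ 1, 0 < α < n, and let u ∈ L^{2n/(n-α)}_{loc}(ℝⁿ) be a positive function satisfying u(x) = ∫_{ℝⁿ} u(y)^{(n+α)/(n-α)} |x-y|^{α-n} dy for a.e. x. Then ∫_{|y|>2} u(y)^{(n+α)/(n-α)} |y|^{α-n} dy < ∞. -/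
open MeasureTheory Metric
open scoped ENNReal

set_option maxHeartbeats 1000000 in
theorem tail_integrability (n : ℕ) (hn : 1 ≤ n) (α : ℝ) (hα0 : 0 < α) (hαn : α < n)
    (u : EuclideanSpace ℝ (Fin n) → ℝ) (hupos : ∀ x, 0 < u x)
    (hloc : ∀ R > (0 : ℝ), MemLp u (ENNReal.ofReal (2 * (n : ℝ) / ((n : ℝ) - α)))
      (volume.restrict (ball (0 : EuclideanSpace ℝ (Fin n)) R)))
    (heq : ∀ᵐ x : EuclideanSpace ℝ (Fin n),
      u x = ∫ y, u y ^ (((n : ℝ) + α) / ((n : ℝ) - α)) * ‖x - y‖ ^ (α - (n : ℝ))) :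
    IntegrableOn
      (fun y : EuclideanSpace ℝ (Fin n) =>
        u y ^ (((n : ℝ) + α) / ((n : ℝ) - α)) * ‖y‖ ^ (α - (n : ℝ)))
      {y : EuclideanSpace ℝ (Fin n) | 2 < ‖y‖} := by
  set p : ℝ := ((n : ℝ) + α) / ((n : ℝ) - α) with hp
  haveI : Nonempty (Fin n) := ⟨⟨0, hn⟩⟩
  -- pick a point x in the unit ball where the integral equation holds
  have hb0 : volume (ball (0 : EuclideanSpace ℝ (Fin n)) 1) ≠ 0 :=
    (measure_ball_pos _ _ one_pos).ne'
  haveI : (ae (volume.restrict (ball (0 : EuclideanSpace ℝ (Fin n)) 1))).NeBot :=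
    ae_neBot.2 (by rwa [Ne, Measure.restrict_eq_zero])
  have hae : ∀ᵐ x ∂(volume.restrict (ball (0 : EuclideanSpace ℝ (Fin n)) 1)),
      ‖x‖ < 1 ∧ u x = ∫ y, u y ^ p * ‖x - y‖ ^ (α - (n : ℝ)) := by
    filter_upwards [ae_restrict_mem measurableSet_ball, ae_restrict_of_ae heq] with x h1 h2
    exact ⟨mem_ball_zero_iff.1 h1, h2⟩
  obtain ⟨x, hx1, hx2⟩ := hae.exists
  -- the integrand at x is integrable (otherwise the integral would be 0, contradicting u x > 0)
  have hint : Integrable (fun y : EuclideanSpace ℝ (Fin n) =>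
      u y ^ p * ‖x - y‖ ^ (α - (n : ℝ))) := by
    by_contra h
    rw [integral_undef h] at hx2
    exact (hupos x).ne' hx2
  have hαn' : α - (n : ℝ) ≤ 0 := by linarith
  -- measurability of the target function
  have hsx : (volume : Measure (EuclideanSpace ℝ (Fin n))) {x} = 0 := measure_singleton x
  have hmeasf : AEStronglyMeasurable
      (fun y : EuclideanSpace ℝ (Fin n) => u y ^ p * ‖y‖ ^ (α - (n : ℝ))) volume := by
    have h1 : AEStronglyMeasurable (fun y : EuclideanSpace ℝ (Fin n) => u y ^ p) volume := by
      have h2 : AEStronglyMeasurable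
          (fun y : EuclideanSpace ℝ (Fin n) =>
            (u y ^ p * ‖x - y‖ ^ (α - (n : ℝ))) * ‖x - y‖ ^ ((n : ℝ) - α))
          volume := by
        refine hint.aestronglyMeasurable.mul ?_
        exact ((measurable_const.sub measurable_id).norm.pow_const _).aestronglyMeasurable
      refine h2.congr ?_
      have hne : ∀ᵐ y : EuclideanSpace ℝ (Fin n), y ≠ x := by
        rw [ae_iff]; simp only [ne_eq, not_not, Set.setOf_eq_eq_singleton]; exact hsx
      filter_upwards [hne] with y hy
      have hxy : (0 : ℝ) < ‖x - y‖ := norm_pos_iff.2 (sub_ne_zero.2 (Ne.symm hy))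
      rw [mul_assoc, ← Real.rpow_add hxy]
      simp
    exact h1.mul (measurable_norm.pow_const _).aestronglyMeasurable
  -- comparison on the tail set
  have hset : MeasurableSet {y : EuclideanSpace ℝ (Fin n) | 2 < ‖y‖} :=
    (isOpen_lt continuous_const continuous_norm).measurableSet
  have hg : IntegrableOn
      (fun y : EuclideanSpace ℝ (Fin n) =>
        (2 / 3 : ℝ) ^ (α - (n : ℝ)) * (u y ^ p * ‖x - y‖ ^ (α - (n : ℝ))))
      {y : EuclideanSpace ℝ (Fin n) | 2 < ‖y‖} :=
    (hint.const_mul _).integrableOn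
  have hbound : ∀ᵐ y ∂(volume.restrict {y : EuclideanSpace ℝ (Fin n) | 2 < ‖y‖}),
      ‖u y ^ p * ‖y‖ ^ (α - (n : ℝ))‖ ≤
      ‖(2 / 3 : ℝ) ^ (α - (n : ℝ)) * (u y ^ p * ‖x - y‖ ^ (α - (n : ℝ)))‖ := by
    filter_upwards [ae_restrict_mem hset] with y hy
    have hy2 : (2 : ℝ) < ‖y‖ := hy
    have h1 : ‖x - y‖ ≤ ‖x‖ + ‖y‖ := norm_sub_le _ _
    have hxy : (2 / 3 : ℝ) * ‖x - y‖ ≤ ‖y‖ := by nlinarith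
    have hxypos : (0 : ℝ) < ‖x - y‖ := by
      have h2 := abs_le.1 (abs_norm_sub_norm_le x y)
      linarith [h2.1]
    have hup : (0 : ℝ) < u y ^ p := Real.rpow_pos_of_pos (hupos y) p
    have hb : ‖y‖ ^ (α - (n : ℝ)) ≤ ((2 / 3 : ℝ) * ‖x - y‖) ^ (α - (n : ℝ)) :=
      Real.rpow_le_rpow_of_nonpos (by positivity) hxy hαn'
    have hbb : ((2 / 3 : ℝ) * ‖x - y‖) ^ (α - (n : ℝ)) =
        (2 / 3 : ℝ) ^ (α - (n : ℝ)) * ‖x - y‖ ^ (α - (n : ℝ)) :=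
      Real.mul_rpow (by norm_num) hxypos.le
    have hfnn : (0 : ℝ) ≤ u y ^ p * ‖y‖ ^ (α - (n : ℝ)) := by positivity
    have hgnn : (0 : ℝ) ≤ (2 / 3 : ℝ) ^ (α - (n : ℝ)) *
        (u y ^ p * ‖x - y‖ ^ (α - (n : ℝ))) := by positivity
    rw [Real.norm_of_nonneg hfnn, Real.norm_of_nonneg hgnn]
    calc u y ^ p * ‖y‖ ^ (α - (n : ℝ))
        ≤ u y ^ p * ((2 / 3 : ℝ) * ‖x - y‖) ^ (α - (n : ℝ)) :=
          mul_le_mul_of_nonneg_left hb hup.le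
      _ = (2 / 3 : ℝ) ^ (α - (n : ℝ)) * (u y ^ p * ‖x - y‖ ^ (α - (n : ℝ))) := by
          rw [hbb]; ring
  exact Integrable.mono hg hmeasf.restrict hbound
end

section
/- Let n ≥ 1, 0 < α < n, 0 < μ, and let u be a positive measurable solution of u(x) = ∫_{ℝⁿ} u(y)^μ |x-y|^{α-n} dy which is not identically +∞. Then u^μ ∈ L¹_{loc}(ℝⁿ), u ∈ L^t_{loc}(ℝⁿ) for every t < n/(n-α), and ∫_{|y|>2} u(y)^μ |y|^{α-n} dy < ∞. -/
open MeasureTheory Metric Set Filter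
open scoped ENNReal

lemma aux_ball_rpow (n : ℕ) (hn : 1 ≤ n) {c : ℝ} (hc : -(n:ℝ) < c) (hc0 : c < 0) (r : ℝ) :
    (∫⁻ z in ball (0 : EuclideanSpace ℝ (Fin n)) r, (ENNReal.ofReal ‖z‖) ^ c) < ⊤ := by
  haveI : Nonempty (Fin n) := ⟨⟨0, hn⟩⟩
  set E := EuclideanSpace ℝ (Fin n)
  have h0 : (volume : Measure E) {0} = 0 := measure_singleton 0
  set μr := (volume : Measure E).restrict (ball (0:E) r) with hμr
  have hae : ∀ᵐ z ∂μr, (ENNReal.ofReal ‖z‖) ^ c = ENNReal.ofReal (‖z‖ ^ c) := by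
    have h1 : ∀ᵐ (z : E) ∂μr, z ≠ 0 :=
      (ae_restrict_of_ae (by
        rw [ae_iff]; simpa using h0))
    filter_upwards [h1] with z hz
    exact ENNReal.ofReal_rpow_of_pos (norm_pos_iff.mpr hz)
  rw [lintegral_congr_ae hae]
  rw [lintegral_eq_lintegral_meas_le μr
    (Eventually.of_forall fun z => Real.rpow_nonneg (norm_nonneg z) c)
    (by fun_prop)]
  set r' := max r 0 with hr'
  set V := (volume : Measure E) (ball (0:E) 1) with hV
  have hVfin : V < ⊤ := measure_ball_lt_top
  have key : ∀ t ∈ Ioi (0:ℝ), μr {a | t ≤ ‖a‖ ^ c}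
      ≤ ENNReal.ofReal ((min r' (t ^ c⁻¹)) ^ n) * V := by
    intro t ht
    have ht : (0:ℝ) < t := ht
    have hsub : {a : E | t ≤ ‖a‖ ^ c} ∩ ball (0:E) r ⊆ closedBall 0 (min r' (t ^ c⁻¹)) := by
      rintro a ⟨ha, hab⟩
      have hane : a ≠ 0 := by
        rintro rfl
        simp only [norm_zero, Real.zero_rpow hc0.ne, mem_setOf_eq] at ha
        exact absurd ha (not_le.mpr ht)
      have hna : 0 < ‖a‖ := norm_pos_iff.mpr hane
      have h2 : ‖a‖ ≤ t ^ c⁻¹ := by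
        have := Real.rpow_le_rpow_of_nonpos (z := c⁻¹) ht ha (inv_nonpos.mpr hc0.le)
        rwa [Real.rpow_rpow_inv hna.le hc0.ne] at this
      rw [mem_closedBall_zero_iff]
      exact le_min (le_trans (le_of_lt (mem_ball_zero_iff.mp hab)) (le_max_left _ _)) h2
    have hmin : 0 ≤ min r' (t ^ c⁻¹) :=
      le_min (le_max_right _ _) (Real.rpow_nonneg ht.le _)
    calc μr {a | t ≤ ‖a‖ ^ c} = volume ({a : E | t ≤ ‖a‖ ^ c} ∩ ball 0 r) := by
          rw [hμr, Measure.restrict_apply]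
          exact measurableSet_le measurable_const (by fun_prop)
      _ ≤ volume (closedBall (0:E) (min r' (t ^ c⁻¹))) := measure_mono hsub
      _ = ENNReal.ofReal ((min r' (t ^ c⁻¹)) ^ Module.finrank ℝ E) * V :=
          Measure.addHaar_closedBall _ _ hmin
      _ = _ := by rw [finrank_euclideanSpace_fin]
  calc ∫⁻ t in Ioi (0:ℝ), μr {a | t ≤ ‖a‖ ^ c}
      ≤ ∫⁻ t in Ioi (0:ℝ), ENNReal.ofReal ((min r' (t ^ c⁻¹)) ^ n) * V :=
        setLIntegral_mono' measurableSet_Ioi key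
    _ ≤ (∫⁻ t in Ioc (0:ℝ) 1, ENNReal.ofReal ((min r' (t ^ c⁻¹)) ^ n) * V)
        + ∫⁻ t in Ioi (1:ℝ), ENNReal.ofReal ((min r' (t ^ c⁻¹)) ^ n) * V := by
        refine le_trans (lintegral_mono_set (fun t ht => ?_)) (lintegral_union_le _ _ _)
        rcases le_or_gt t 1 with h | h
        · exact Or.inl ⟨ht, h⟩
        · exact Or.inr h
    _ < ⊤ := by
        refine ENNReal.add_lt_top.mpr ⟨?_, ?_⟩
        · calc ∫⁻ t in Ioc (0:ℝ) 1, ENNReal.ofReal ((min r' (t ^ c⁻¹)) ^ n) * V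
              ≤ ∫⁻ _ in Ioc (0:ℝ) 1, ENNReal.ofReal (r' ^ n) * V := by
                refine setLIntegral_mono' measurableSet_Ioc fun t ht => ?_
                have hmin : 0 ≤ min r' (t ^ c⁻¹) :=
                  le_min (le_max_right _ _) (Real.rpow_nonneg ht.1.le _)
                exact mul_le_mul_left (ENNReal.ofReal_le_ofReal
                  (pow_le_pow_left₀ hmin (min_le_left _ _) n)) V
            _ = ENNReal.ofReal (r' ^ n) * V * volume (Ioc (0:ℝ) 1) := by
                rw [setLIntegral_const]
            _ < ⊤ := by
                refine ENNReal.mul_lt_top (ENNReal.mul_lt_top ENNReal.ofReal_lt_top hVfin) ?_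
                simp [Real.volume_Ioc]
        · have hlt : (n:ℝ) * c⁻¹ < -1 := by
            nlinarith [mul_inv_cancel₀ hc0.ne, inv_lt_zero.mpr hc0]
          calc ∫⁻ t in Ioi (1:ℝ), ENNReal.ofReal ((min r' (t ^ c⁻¹)) ^ n) * V
              ≤ ∫⁻ t in Ioi (1:ℝ), ENNReal.ofReal (t ^ ((n:ℝ) * c⁻¹)) * V := by
                refine setLIntegral_mono' measurableSet_Ioi fun t ht => ?_
                have ht1 : (1:ℝ) < t := ht
                have heq : (t ^ c⁻¹) ^ n = t ^ ((n:ℝ) * c⁻¹) := by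
                  rw [mul_comm, Real.rpow_mul (by linarith), Real.rpow_natCast]
                have hmin : 0 ≤ min r' (t ^ c⁻¹) :=
                  le_min (le_max_right _ _) (Real.rpow_nonneg (by linarith) _)
                refine mul_le_mul_left (ENNReal.ofReal_le_ofReal ?_) V
                rw [← heq]
                exact pow_le_pow_left₀ hmin (min_le_right _ _) n
            _ = (∫⁻ t in Ioi (1:ℝ), ENNReal.ofReal (t ^ ((n:ℝ) * c⁻¹))) * V :=
                lintegral_mul_const' _ _ hVfin.ne
            _ < ⊤ := by
                refine ENNReal.mul_lt_top ?_ hVfin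
                exact IntegrableOn.setLIntegral_lt_top
                  (integrableOn_Ioi_rpow_of_lt hlt one_pos)

lemma aux_rpow_anti {x y : ℝ≥0∞} {c : ℝ} (hc : c ≤ 0) (hxy : x ≤ y) : y ^ c ≤ x ^ c := by
  have h := ENNReal.rpow_le_rpow hxy (neg_nonneg.mpr hc)
  have h2 : y ^ c = (y ^ (-c))⁻¹ := by rw [← ENNReal.rpow_neg, neg_neg]
  have h3 : x ^ c = (x ^ (-c))⁻¹ := by rw [← ENNReal.rpow_neg, neg_neg]
  rw [h2, h3]
  exact ENNReal.inv_le_inv.mpr h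

lemma aux_add_rpow (a b : ℝ≥0∞) {s : ℝ} (hs : 0 ≤ s) :
    (a + b) ^ s ≤ 2 ^ s * a ^ s + 2 ^ s * b ^ s := by
  have h1 : a + b ≤ 2 * max a b := by
    rw [two_mul]; exact add_le_add (le_max_left _ _) (le_max_right _ _)
  calc (a + b) ^ s ≤ (2 * max a b) ^ s := ENNReal.rpow_le_rpow h1 hs
    _ = 2 ^ s * (max a b) ^ s := ENNReal.mul_rpow_of_nonneg _ _ hs
    _ ≤ 2 ^ s * (a ^ s + b ^ s) := by
        refine mul_le_mul_right ?_ _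
        rcases max_cases a b with ⟨h, _⟩ | ⟨h, _⟩ <;> rw [h]
        exacts [le_self_add, le_add_self]
    _ = 2 ^ s * a ^ s + 2 ^ s * b ^ s := by rw [mul_add]

lemma core_lemma (n : ℕ) (hn : 1 ≤ n) (α μ : ℝ) (hα0 : 0 < α)
    (hαn : α < n) (hμ : 0 < μ)
    (u : EuclideanSpace ℝ (Fin n) → ℝ≥0∞) (hu : Measurable u)
    (heq : ∀ x, u x = ∫⁻ y, u y ^ μ * (ENNReal.ofReal ‖x - y‖) ^ (α - (n : ℝ)))
    (part1 : ∀ R > (0 : ℝ), (∫⁻ y in ball (0 : EuclideanSpace ℝ (Fin n)) R, u y ^ μ) < ⊤)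
    (part3 : (∫⁻ y in {y : EuclideanSpace ℝ (Fin n) | 2 < ‖y‖},
        u y ^ μ * (ENNReal.ofReal ‖y‖) ^ (α - (n : ℝ))) < ⊤)
    {s : ℝ} (hs1 : 1 < s) (hsn : s < (n : ℝ) / ((n : ℝ) - α)) (R : ℝ) (hR : 0 < R) :
    (∫⁻ x in ball (0 : EuclideanSpace ℝ (Fin n)) R, u x ^ s) < ⊤ := by
  have hnα : (0:ℝ) < (n:ℝ) - α := by linarith
  have hs0 : (0:ℝ) < s := lt_trans one_pos hs1
  set M : ℝ := 2 * R + 3 with hMdef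
  have hM3 : (3:ℝ) ≤ M := by linarith
  have hM0 : (0:ℝ) < M := by linarith
  set c' : ℝ := (α - n) * s with hc'def
  have hc'0 : c' < 0 := mul_neg_of_neg_of_pos (by linarith) hs0
  have hc'n : -(n:ℝ) < c' := by
    have h := (lt_div_iff₀ hnα).mp hsn
    nlinarith
  -- constants
  have hc₂top : (ENNReal.ofReal (1/2) ^ (α - (n:ℝ))) ≠ ⊤ := by
    simp only [Ne, ENNReal.rpow_eq_top_iff, ENNReal.ofReal_eq_zero, ENNReal.ofReal_ne_top,
      false_and, or_false, not_and, not_lt]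
    intro h; norm_num at h
  set c₂ : ℝ≥0∞ := ENNReal.ofReal (1/2) ^ (α - (n:ℝ)) with hc₂def
  set T : ℝ≥0∞ := ∫⁻ y in {y : EuclideanSpace ℝ (Fin n) | 2 < ‖y‖},
      u y ^ μ * (ENNReal.ofReal ‖y‖) ^ (α - (n : ℝ)) with hTdef
  have hBtop : c₂ * T ≠ ⊤ := ENNReal.mul_ne_top hc₂top part3.ne
  -- Step B : pointwise upper bound on the ball
  have hub : ∀ x ∈ ball (0 : EuclideanSpace ℝ (Fin n)) R,
      u x ≤ (∫⁻ y in ball (0 : EuclideanSpace ℝ (Fin n)) M,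
        u y ^ μ * (ENNReal.ofReal ‖x - y‖) ^ (α - (n : ℝ))) + c₂ * T := by
    intro x hx
    have hx' : ‖x‖ < R := mem_ball_zero_iff.mp hx
    rw [heq x, ← lintegral_add_compl (fun y => u y ^ μ * (ENNReal.ofReal ‖x - y‖) ^ (α - (n:ℝ)))
      (measurableSet_ball : MeasurableSet (ball (0 : EuclideanSpace ℝ (Fin n)) M))]
    refine add_le_add le_rfl ?_
    calc ∫⁻ y in (ball (0 : EuclideanSpace ℝ (Fin n)) M)ᶜ,
          u y ^ μ * (ENNReal.ofReal ‖x - y‖) ^ (α - (n:ℝ))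
        ≤ ∫⁻ y in (ball (0 : EuclideanSpace ℝ (Fin n)) M)ᶜ,
          c₂ * (u y ^ μ * (ENNReal.ofReal ‖y‖) ^ (α - (n:ℝ))) := by
          refine setLIntegral_mono' measurableSet_ball.compl fun y hy => ?_
          have hyM : M ≤ ‖y‖ := not_lt.mp (fun h => hy (mem_ball_zero_iff.mpr h))
          have h12 : (1/2 : ℝ) * ‖y‖ ≤ ‖x - y‖ := by
            have h1 : ‖y‖ - ‖x‖ ≤ ‖y - x‖ := norm_sub_norm_le _ _
            rw [norm_sub_rev] at h1
            linarith
          have hy0 : ENNReal.ofReal ‖y‖ ≠ 0 :=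
            (ENNReal.ofReal_pos.mpr (by linarith)).ne'
          have hkb : (ENNReal.ofReal ‖x - y‖) ^ (α - (n:ℝ))
              ≤ c₂ * (ENNReal.ofReal ‖y‖) ^ (α - (n:ℝ)) := by
            have h1 := aux_rpow_anti (c := α - (n:ℝ)) (by linarith)
              (ENNReal.ofReal_le_ofReal h12)
            rwa [ENNReal.ofReal_mul (by norm_num : (0:ℝ) ≤ 1/2),
              ENNReal.mul_rpow_of_ne_zero (by simp) hy0] at h1
          calc u y ^ μ * (ENNReal.ofReal ‖x - y‖) ^ (α - (n:ℝ))
              ≤ u y ^ μ * (c₂ * (ENNReal.ofReal ‖y‖) ^ (α - (n:ℝ))) :=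
                mul_le_mul_right hkb _
            _ = c₂ * (u y ^ μ * (ENNReal.ofReal ‖y‖) ^ (α - (n:ℝ))) := by ring
      _ = c₂ * ∫⁻ y in (ball (0 : EuclideanSpace ℝ (Fin n)) M)ᶜ,
            u y ^ μ * (ENNReal.ofReal ‖y‖) ^ (α - (n:ℝ)) :=
          lintegral_const_mul' _ _ hc₂top
      _ ≤ c₂ * T := by
          refine mul_le_mul_right (lintegral_mono_set fun y hy => ?_) _
          have hyM : M ≤ ‖y‖ := not_lt.mp (fun h => hy (mem_ball_zero_iff.mpr h))
          exact (by linarith : (2:ℝ) < ‖y‖)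
  have hF : (∫⁻ y in ball (0 : EuclideanSpace ℝ (Fin n)) M, u y ^ μ) < ⊤ := part1 M hM0
  set F : ℝ≥0∞ := ∫⁻ y in ball (0 : EuclideanSpace ℝ (Fin n)) M, u y ^ μ with hFdef
  have hI : (∫⁻ z in ball (0 : EuclideanSpace ℝ (Fin n)) (R + M),
      (ENNReal.ofReal ‖z‖) ^ c') < ⊤ := aux_ball_rpow n hn hc'n hc'0 (R + M)
  set I : ℝ≥0∞ := ∫⁻ z in ball (0 : EuclideanSpace ℝ (Fin n)) (R + M),
      (ENNReal.ofReal ‖z‖) ^ c' with hIdef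
  -- translation bound
  have htrans : ∀ y : EuclideanSpace ℝ (Fin n), ‖y‖ < M →
      (∫⁻ x in ball (0 : EuclideanSpace ℝ (Fin n)) R, (ENNReal.ofReal ‖x - y‖) ^ c') ≤ I := by
    intro y hyM
    have hgm : Measurable fun z : EuclideanSpace ℝ (Fin n) => (ENNReal.ofReal ‖z‖) ^ c' := by
      fun_prop
    calc ∫⁻ x in ball (0 : EuclideanSpace ℝ (Fin n)) R, (ENNReal.ofReal ‖x - y‖) ^ c'
        = ∫⁻ x, (ball (0 : EuclideanSpace ℝ (Fin n)) R).indicator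
            (fun x => (ENNReal.ofReal ‖x - y‖) ^ c') x := by
          rw [lintegral_indicator]
          exact measurableSet_ball
      _ = ∫⁻ z, (ball (0 : EuclideanSpace ℝ (Fin n)) R).indicator
            (fun x => (ENNReal.ofReal ‖x - y‖) ^ c') (z + y) :=
          (lintegral_add_right_eq_self _ y).symm
      _ ≤ ∫⁻ z, (ball (0 : EuclideanSpace ℝ (Fin n)) (R + M)).indicator
            (fun z => (ENNReal.ofReal ‖z‖) ^ c') z := by
          refine lintegral_mono fun z => ?_
          by_cases hz : z + y ∈ ball (0 : EuclideanSpace ℝ (Fin n)) R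
          · have hz2 : z ∈ ball (0 : EuclideanSpace ℝ (Fin n)) (R + M) := by
              rw [mem_ball_zero_iff] at hz ⊢
              calc ‖z‖ = ‖(z + y) - y‖ := by rw [add_sub_cancel_right]
                _ ≤ ‖z + y‖ + ‖y‖ := norm_sub_le _ _
                _ < R + M := add_lt_add hz hyM
            rw [indicator_of_mem hz, indicator_of_mem hz2, add_sub_cancel_right]
          · rw [indicator_of_notMem hz]; exact zero_le
      _ = I := by rw [lintegral_indicator]; exact measurableSet_ball
  -- Hölder pointwise bound
  have hhol : ∀ x : EuclideanSpace ℝ (Fin n),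
      (∫⁻ y in ball (0 : EuclideanSpace ℝ (Fin n)) M,
        u y ^ μ * (ENNReal.ofReal ‖x - y‖) ^ (α - (n : ℝ))) ^ s
      ≤ F ^ (s - 1) * ∫⁻ y in ball (0 : EuclideanSpace ℝ (Fin n)) M,
          u y ^ μ * (ENNReal.ofReal ‖x - y‖) ^ c' := by
    intro x
    have hpq : (s / (s - 1)).HolderConjugate s := (Real.HolderConjugate.conjExponent hs1).symm
    have hs1' : s - 1 ≠ 0 := by linarith
    have ha0 : (0:ℝ) ≤ (s - 1) / s := div_nonneg (by linarith) hs0.le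
    have hmf : AEMeasurable (fun y : EuclideanSpace ℝ (Fin n) => (u y ^ μ) ^ ((s - 1) / s))
        (volume.restrict (ball (0 : EuclideanSpace ℝ (Fin n)) M)) := by fun_prop
    have hmg : AEMeasurable (fun y : EuclideanSpace ℝ (Fin n) =>
        (u y ^ μ) ^ (1 / s) * (ENNReal.ofReal ‖x - y‖) ^ (α - (n : ℝ)))
        (volume.restrict (ball (0 : EuclideanSpace ℝ (Fin n)) M)) := by fun_prop
    have H := ENNReal.lintegral_mul_le_Lp_mul_Lq
      (volume.restrict (ball (0 : EuclideanSpace ℝ (Fin n)) M)) hpq hmf hmg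
    have hfg : (∫⁻ y in ball (0 : EuclideanSpace ℝ (Fin n)) M,
        u y ^ μ * (ENNReal.ofReal ‖x - y‖) ^ (α - (n : ℝ)))
        = ∫⁻ y, ((fun y => (u y ^ μ) ^ ((s - 1) / s)) * fun y =>
            (u y ^ μ) ^ (1 / s) * (ENNReal.ofReal ‖x - y‖) ^ (α - (n : ℝ))) y
          ∂(volume.restrict (ball (0 : EuclideanSpace ℝ (Fin n)) M)) := by
      refine lintegral_congr fun y => ?_
      simp only [Pi.mul_apply]
      rw [← mul_assoc, ← ENNReal.rpow_add_of_nonneg _ _ ha0 (by positivity),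
        (by field_simp; ring : (s - 1) / s + 1 / s = 1), ENNReal.rpow_one]
    have hfp : (∫⁻ y, ((fun y => (u y ^ μ) ^ ((s - 1) / s)) y) ^ (s / (s - 1))
        ∂(volume.restrict (ball (0 : EuclideanSpace ℝ (Fin n)) M))) = F := by
      refine lintegral_congr fun y => ?_
      rw [← ENNReal.rpow_mul, (by field_simp : (s - 1) / s * (s / (s - 1)) = 1),
        ENNReal.rpow_one]
    have hgq : (∫⁻ y, ((fun y => (u y ^ μ) ^ (1 / s) *
          (ENNReal.ofReal ‖x - y‖) ^ (α - (n : ℝ))) y) ^ s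
        ∂(volume.restrict (ball (0 : EuclideanSpace ℝ (Fin n)) M)))
        = ∫⁻ y in ball (0 : EuclideanSpace ℝ (Fin n)) M,
            u y ^ μ * (ENNReal.ofReal ‖x - y‖) ^ c' := by
      refine lintegral_congr fun y => ?_
      rw [ENNReal.mul_rpow_of_nonneg _ _ hs0.le,
        ← ENNReal.rpow_mul (ENNReal.ofReal ‖x - y‖) (α - (n:ℝ)) s,
        ← ENNReal.rpow_mul (u y ^ μ) (1 / s) s,
        (by field_simp : 1 / s * s = 1), ENNReal.rpow_one, hc'def]
    rw [hfp, hgq] at H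
    rw [hfg]
    calc (∫⁻ y, _ ∂_) ^ s
        ≤ (F ^ (1 / (s / (s - 1))) * (∫⁻ y in ball (0 : EuclideanSpace ℝ (Fin n)) M,
            u y ^ μ * (ENNReal.ofReal ‖x - y‖) ^ c') ^ (1 / s)) ^ s :=
          ENNReal.rpow_le_rpow H hs0.le
      _ = F ^ (s - 1) * ∫⁻ y in ball (0 : EuclideanSpace ℝ (Fin n)) M,
            u y ^ μ * (ENNReal.ofReal ‖x - y‖) ^ c' := by
          rw [ENNReal.mul_rpow_of_nonneg _ _ hs0.le,
            ← ENNReal.rpow_mul F (1 / (s / (s - 1))) s,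
            ← ENNReal.rpow_mul _ (1 / s) s,
            (by field_simp : 1 / (s / (s - 1)) * s = s - 1),
            (by field_simp : 1 / s * s = 1), ENNReal.rpow_one]
  -- Tonelli bound
  have hWx : (∫⁻ x in ball (0 : EuclideanSpace ℝ (Fin n)) R,
      ∫⁻ y in ball (0 : EuclideanSpace ℝ (Fin n)) M,
        u y ^ μ * (ENNReal.ofReal ‖x - y‖) ^ c') ≤ F * I := by
    have hmeas : AEMeasurable (Function.uncurry fun (x y : EuclideanSpace ℝ (Fin n)) =>
        u y ^ μ * (ENNReal.ofReal ‖x - y‖) ^ c')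
        ((volume.restrict (ball (0 : EuclideanSpace ℝ (Fin n)) R)).prod
          (volume.restrict (ball (0 : EuclideanSpace ℝ (Fin n)) M))) := by
      apply Measurable.aemeasurable
      fun_prop
    calc (∫⁻ x in ball (0 : EuclideanSpace ℝ (Fin n)) R,
          ∫⁻ y in ball (0 : EuclideanSpace ℝ (Fin n)) M,
            u y ^ μ * (ENNReal.ofReal ‖x - y‖) ^ c')
        = ∫⁻ y in ball (0 : EuclideanSpace ℝ (Fin n)) M,
            ∫⁻ x in ball (0 : EuclideanSpace ℝ (Fin n)) R,
              u y ^ μ * (ENNReal.ofReal ‖x - y‖) ^ c' :=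
          lintegral_lintegral_swap hmeas
      _ = ∫⁻ y in ball (0 : EuclideanSpace ℝ (Fin n)) M,
            u y ^ μ * ∫⁻ x in ball (0 : EuclideanSpace ℝ (Fin n)) R,
              (ENNReal.ofReal ‖x - y‖) ^ c' := by
          refine lintegral_congr fun y => ?_
          exact lintegral_const_mul _ (by fun_prop)
      _ ≤ ∫⁻ y in ball (0 : EuclideanSpace ℝ (Fin n)) M, u y ^ μ * I := by
          refine setLIntegral_mono' measurableSet_ball fun y hy => ?_
          exact mul_le_mul_right (htrans y (mem_ball_zero_iff.mp hy)) _
      _ = F * I := lintegral_mul_const' I _ hI.ne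
  have hFs : F ^ (s - 1) ≠ ⊤ := ENNReal.rpow_ne_top_of_nonneg (by linarith) hF.ne
  have h2s : ((2:ℝ≥0∞) ^ s) ≠ ⊤ := ENNReal.rpow_ne_top_of_nonneg hs0.le (by norm_num)
  calc ∫⁻ x in ball (0 : EuclideanSpace ℝ (Fin n)) R, u x ^ s
      ≤ ∫⁻ x in ball (0 : EuclideanSpace ℝ (Fin n)) R,
          (2 ^ s * ((∫⁻ y in ball (0 : EuclideanSpace ℝ (Fin n)) M,
            u y ^ μ * (ENNReal.ofReal ‖x - y‖) ^ (α - (n : ℝ))) ^ s) + 2 ^ s * (c₂ * T) ^ s) := by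
        refine setLIntegral_mono' measurableSet_ball fun x hx => ?_
        exact le_trans (ENNReal.rpow_le_rpow (hub x hx) hs0.le) (aux_add_rpow _ _ hs0.le)
    _ = (∫⁻ x in ball (0 : EuclideanSpace ℝ (Fin n)) R,
          2 ^ s * ((∫⁻ y in ball (0 : EuclideanSpace ℝ (Fin n)) M,
            u y ^ μ * (ENNReal.ofReal ‖x - y‖) ^ (α - (n : ℝ))) ^ s))
        + (2 ^ s * (c₂ * T) ^ s) * volume (ball (0 : EuclideanSpace ℝ (Fin n)) R) := by
        rw [lintegral_add_right _ measurable_const, setLIntegral_const]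
    _ ≤ 2 ^ s * (F ^ (s - 1) * (F * I))
        + (2 ^ s * (c₂ * T) ^ s) * volume (ball (0 : EuclideanSpace ℝ (Fin n)) R) := by
        refine add_le_add ?_ le_rfl
        rw [lintegral_const_mul' _ _ h2s]
        refine mul_le_mul_right ?_ _
        calc ∫⁻ x in ball (0 : EuclideanSpace ℝ (Fin n)) R,
              (∫⁻ y in ball (0 : EuclideanSpace ℝ (Fin n)) M,
                u y ^ μ * (ENNReal.ofReal ‖x - y‖) ^ (α - (n : ℝ))) ^ s
            ≤ ∫⁻ x in ball (0 : EuclideanSpace ℝ (Fin n)) R,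
                F ^ (s - 1) * ∫⁻ y in ball (0 : EuclideanSpace ℝ (Fin n)) M,
                  u y ^ μ * (ENNReal.ofReal ‖x - y‖) ^ c' :=
              setLIntegral_mono' measurableSet_ball fun x _ => hhol x
          _ = F ^ (s - 1) * ∫⁻ x in ball (0 : EuclideanSpace ℝ (Fin n)) R,
                ∫⁻ y in ball (0 : EuclideanSpace ℝ (Fin n)) M,
                  u y ^ μ * (ENNReal.ofReal ‖x - y‖) ^ c' :=
              lintegral_const_mul' _ _ hFs
          _ ≤ F ^ (s - 1) * (F * I) := mul_le_mul_right hWx _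
    _ < ⊤ := by
        refine ENNReal.add_lt_top.mpr ⟨?_, ?_⟩
        · exact ENNReal.mul_lt_top h2s.lt_top
            (ENNReal.mul_lt_top hFs.lt_top (ENNReal.mul_lt_top hF hI))
        · exact ENNReal.mul_lt_top
            (ENNReal.mul_lt_top h2s.lt_top
              (ENNReal.rpow_lt_top_of_nonneg hs0.le hBtop))
            measure_ball_lt_top

theorem local_integrability_of_solution (n : ℕ) (hn : 1 ≤ n) (α μ : ℝ) (hα0 : 0 < α)
    (hαn : α < n) (hμ : 0 < μ)
    (u : EuclideanSpace ℝ (Fin n) → ℝ≥0∞) (hu : Measurable u) (hupos : ∀ x, 0 < u x)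
    (heq : ∀ x, u x = ∫⁻ y, u y ^ μ * (ENNReal.ofReal ‖x - y‖) ^ (α - (n : ℝ)))
    (hne : ¬ ∀ x, u x = ⊤) :
    (∀ R > (0 : ℝ), (∫⁻ y in ball (0 : EuclideanSpace ℝ (Fin n)) R, u y ^ μ) < ⊤) ∧
    (∀ t : ℝ, 0 < t → t < (n : ℝ) / ((n : ℝ) - α) →
      ∀ R > (0 : ℝ), (∫⁻ y in ball (0 : EuclideanSpace ℝ (Fin n)) R, u y ^ t) < ⊤) ∧
    (∫⁻ y in {y : EuclideanSpace ℝ (Fin n) | 2 < ‖y‖},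
        u y ^ μ * (ENNReal.ofReal ‖y‖) ^ (α - (n : ℝ))) < ⊤ := by
  push_neg at hne
  obtain ⟨x₀, hx₀⟩ := hne
  have hnα : (0:ℝ) < (n:ℝ) - α := by linarith
  have hfin : (∫⁻ y, u y ^ μ * (ENNReal.ofReal ‖x₀ - y‖) ^ (α - (n:ℝ))) ≠ ⊤ := by
    rw [← heq x₀]; exact hx₀
  have part1 : ∀ R > (0 : ℝ), (∫⁻ y in ball (0 : EuclideanSpace ℝ (Fin n)) R, u y ^ μ) < ⊤ := by
    intro R hR
    have hC0 : ENNReal.ofReal (‖x₀‖ + R) ≠ 0 := (ENNReal.ofReal_pos.mpr (by positivity)).ne'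
    have hCt : ENNReal.ofReal (‖x₀‖ + R) ≠ ⊤ := ENNReal.ofReal_ne_top
    have hCs : (ENNReal.ofReal (‖x₀‖ + R)) ^ ((n:ℝ) - α) ≠ ⊤ :=
      ENNReal.rpow_ne_top_of_nonneg (by linarith) hCt
    have hkey : ∀ y ∈ ball (0 : EuclideanSpace ℝ (Fin n)) R,
        u y ^ μ ≤ (ENNReal.ofReal (‖x₀‖ + R)) ^ ((n:ℝ) - α) *
          (u y ^ μ * (ENNReal.ofReal ‖x₀ - y‖) ^ (α - (n:ℝ))) := by
      intro y hy
      have hy' : ‖y‖ < R := mem_ball_zero_iff.mp hy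
      have hnorm : ‖x₀ - y‖ ≤ ‖x₀‖ + R := by
        calc ‖x₀ - y‖ ≤ ‖x₀‖ + ‖y‖ := norm_sub_le _ _
          _ ≤ ‖x₀‖ + R := by linarith
      have h1 : (ENNReal.ofReal (‖x₀‖ + R)) ^ (α - (n:ℝ))
          ≤ (ENNReal.ofReal ‖x₀ - y‖) ^ (α - (n:ℝ)) :=
        aux_rpow_anti (by linarith) (ENNReal.ofReal_le_ofReal hnorm)
      have hcan : (ENNReal.ofReal (‖x₀‖ + R)) ^ ((n:ℝ) - α) *
          (ENNReal.ofReal (‖x₀‖ + R)) ^ (α - (n:ℝ)) = 1 := by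
        rw [← ENNReal.rpow_add _ _ hC0 hCt,
          (by ring : ((n:ℝ) - α) + (α - (n:ℝ)) = 0), ENNReal.rpow_zero]
      calc u y ^ μ = ((ENNReal.ofReal (‖x₀‖ + R)) ^ ((n:ℝ) - α) *
            (ENNReal.ofReal (‖x₀‖ + R)) ^ (α - (n:ℝ))) * u y ^ μ := by rw [hcan, one_mul]
        _ ≤ ((ENNReal.ofReal (‖x₀‖ + R)) ^ ((n:ℝ) - α) *
            (ENNReal.ofReal ‖x₀ - y‖) ^ (α - (n:ℝ))) * u y ^ μ :=
          mul_le_mul_left (mul_le_mul_right h1 _) _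
        _ = (ENNReal.ofReal (‖x₀‖ + R)) ^ ((n:ℝ) - α) *
            (u y ^ μ * (ENNReal.ofReal ‖x₀ - y‖) ^ (α - (n:ℝ))) := by ring
    calc ∫⁻ y in ball (0 : EuclideanSpace ℝ (Fin n)) R, u y ^ μ
        ≤ ∫⁻ y in ball (0 : EuclideanSpace ℝ (Fin n)) R,
            (ENNReal.ofReal (‖x₀‖ + R)) ^ ((n:ℝ) - α) *
              (u y ^ μ * (ENNReal.ofReal ‖x₀ - y‖) ^ (α - (n:ℝ))) :=
          setLIntegral_mono' measurableSet_ball hkey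
      _ = (ENNReal.ofReal (‖x₀‖ + R)) ^ ((n:ℝ) - α) *
            ∫⁻ y in ball (0 : EuclideanSpace ℝ (Fin n)) R,
              u y ^ μ * (ENNReal.ofReal ‖x₀ - y‖) ^ (α - (n:ℝ)) :=
          lintegral_const_mul' _ _ hCs
      _ ≤ (ENNReal.ofReal (‖x₀‖ + R)) ^ ((n:ℝ) - α) *
            ∫⁻ y, u y ^ μ * (ENNReal.ofReal ‖x₀ - y‖) ^ (α - (n:ℝ)) :=
          mul_le_mul_right (setLIntegral_le_lintegral _ _) _
      _ < ⊤ := ENNReal.mul_lt_top hCs.lt_top hfin.lt_top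
  have part3 : (∫⁻ y in {y : EuclideanSpace ℝ (Fin n) | 2 < ‖y‖},
      u y ^ μ * (ENNReal.ofReal ‖y‖) ^ (α - (n : ℝ))) < ⊤ := by
    have hc : (0:ℝ) < ‖x₀‖ / 2 + 1 := by positivity
    have hC0 : ENNReal.ofReal (‖x₀‖ / 2 + 1) ≠ 0 := (ENNReal.ofReal_pos.mpr hc).ne'
    have hCt : ENNReal.ofReal (‖x₀‖ / 2 + 1) ≠ ⊤ := ENNReal.ofReal_ne_top
    have hCs : (ENNReal.ofReal (‖x₀‖ / 2 + 1)) ^ ((n:ℝ) - α) ≠ ⊤ :=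
      ENNReal.rpow_ne_top_of_nonneg (by linarith) hCt
    have hmeasS : MeasurableSet {y : EuclideanSpace ℝ (Fin n) | 2 < ‖y‖} :=
      measurableSet_lt measurable_const measurable_norm
    have hkey : ∀ y ∈ {y : EuclideanSpace ℝ (Fin n) | 2 < ‖y‖},
        u y ^ μ * (ENNReal.ofReal ‖y‖) ^ (α - (n:ℝ))
        ≤ (ENNReal.ofReal (‖x₀‖ / 2 + 1)) ^ ((n:ℝ) - α) *
          (u y ^ μ * (ENNReal.ofReal ‖x₀ - y‖) ^ (α - (n:ℝ))) := by
      intro y hy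
      have hy2 : (2:ℝ) < ‖y‖ := hy
      have hy0 : ENNReal.ofReal ‖y‖ ≠ 0 := (ENNReal.ofReal_pos.mpr (by linarith)).ne'
      have hnorm : ‖x₀ - y‖ ≤ (‖x₀‖ / 2 + 1) * ‖y‖ := by
        have h1 : ‖x₀ - y‖ ≤ ‖x₀‖ + ‖y‖ := norm_sub_le _ _
        nlinarith [norm_nonneg x₀]
      have h1 : (ENNReal.ofReal ((‖x₀‖ / 2 + 1) * ‖y‖)) ^ (α - (n:ℝ))
          ≤ (ENNReal.ofReal ‖x₀ - y‖) ^ (α - (n:ℝ)) :=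
        aux_rpow_anti (by linarith) (ENNReal.ofReal_le_ofReal hnorm)
      rw [ENNReal.ofReal_mul hc.le, ENNReal.mul_rpow_of_ne_zero hC0 hy0] at h1
      have hcan : (ENNReal.ofReal (‖x₀‖ / 2 + 1)) ^ ((n:ℝ) - α) *
          (ENNReal.ofReal (‖x₀‖ / 2 + 1)) ^ (α - (n:ℝ)) = 1 := by
        rw [← ENNReal.rpow_add _ _ hC0 hCt,
          (by ring : ((n:ℝ) - α) + (α - (n:ℝ)) = 0), ENNReal.rpow_zero]
      calc u y ^ μ * (ENNReal.ofReal ‖y‖) ^ (α - (n:ℝ))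
          = ((ENNReal.ofReal (‖x₀‖ / 2 + 1)) ^ ((n:ℝ) - α) *
              (ENNReal.ofReal (‖x₀‖ / 2 + 1)) ^ (α - (n:ℝ))) *
              (u y ^ μ * (ENNReal.ofReal ‖y‖) ^ (α - (n:ℝ))) := by rw [hcan, one_mul]
        _ = (ENNReal.ofReal (‖x₀‖ / 2 + 1)) ^ ((n:ℝ) - α) *
            (u y ^ μ * ((ENNReal.ofReal (‖x₀‖ / 2 + 1)) ^ (α - (n:ℝ)) *
              (ENNReal.ofReal ‖y‖) ^ (α - (n:ℝ)))) := by ring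
        _ ≤ (ENNReal.ofReal (‖x₀‖ / 2 + 1)) ^ ((n:ℝ) - α) *
            (u y ^ μ * (ENNReal.ofReal ‖x₀ - y‖) ^ (α - (n:ℝ))) :=
          mul_le_mul_right (mul_le_mul_right h1 _) _
    calc ∫⁻ y in {y : EuclideanSpace ℝ (Fin n) | 2 < ‖y‖},
          u y ^ μ * (ENNReal.ofReal ‖y‖) ^ (α - (n:ℝ))
        ≤ ∫⁻ y in {y : EuclideanSpace ℝ (Fin n) | 2 < ‖y‖},
            (ENNReal.ofReal (‖x₀‖ / 2 + 1)) ^ ((n:ℝ) - α) *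
              (u y ^ μ * (ENNReal.ofReal ‖x₀ - y‖) ^ (α - (n:ℝ))) :=
          setLIntegral_mono' hmeasS hkey
      _ = (ENNReal.ofReal (‖x₀‖ / 2 + 1)) ^ ((n:ℝ) - α) *
            ∫⁻ y in {y : EuclideanSpace ℝ (Fin n) | 2 < ‖y‖},
              u y ^ μ * (ENNReal.ofReal ‖x₀ - y‖) ^ (α - (n:ℝ)) :=
          lintegral_const_mul' _ _ hCs
      _ ≤ (ENNReal.ofReal (‖x₀‖ / 2 + 1)) ^ ((n:ℝ) - α) *
            ∫⁻ y, u y ^ μ * (ENNReal.ofReal ‖x₀ - y‖) ^ (α - (n:ℝ)) :=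
          mul_le_mul_right (setLIntegral_le_lintegral _ _) _
      _ < ⊤ := ENNReal.mul_lt_top hCs.lt_top hfin.lt_top
  refine ⟨part1, ?_, part3⟩
  intro t ht htlt R hR
  have h1 : 1 < (n:ℝ) / ((n:ℝ) - α) := (one_lt_div hnα).mpr (by linarith)
  have hs1 : 1 < max t ((1 + (n:ℝ) / ((n:ℝ) - α)) / 2) :=
    lt_max_of_lt_right (by linarith)
  have hsn : max t ((1 + (n:ℝ) / ((n:ℝ) - α)) / 2) < (n:ℝ) / ((n:ℝ) - α) :=
    max_lt htlt (by linarith)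
  have hts : t ≤ max t ((1 + (n:ℝ) / ((n:ℝ) - α)) / 2) := le_max_left _ _
  have hcore := core_lemma n hn α μ hα0 hαn hμ u hu heq part1 part3 hs1 hsn R hR
  calc ∫⁻ y in ball (0 : EuclideanSpace ℝ (Fin n)) R, u y ^ t
      ≤ ∫⁻ y in ball (0 : EuclideanSpace ℝ (Fin n)) R,
          (1 + u y ^ max t ((1 + (n:ℝ) / ((n:ℝ) - α)) / 2)) := by
        refine setLIntegral_mono' measurableSet_ball fun y _ => ?_
        rcases le_total (u y) 1 with h | h
        · exact (ENNReal.rpow_le_one h ht.le).trans le_self_add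
        · exact (ENNReal.rpow_le_rpow_of_exponent_le h hts).trans le_add_self
    _ = volume (ball (0 : EuclideanSpace ℝ (Fin n)) R)
        + ∫⁻ y in ball (0 : EuclideanSpace ℝ (Fin n)) R,
            u y ^ max t ((1 + (n:ℝ) / ((n:ℝ) - α)) / 2) := by
        rw [lintegral_add_left measurable_const, setLIntegral_const, one_mul]
    _ < ⊤ := ENNReal.add_lt_top.mpr ⟨measure_ball_lt_top, hcore⟩
end

section
/- Let n ≥ 1, 0 < α < n, and let u be a positive continuous solution of u(x) = ∫_{ℝⁿ} u(y)^μ |x-y|^{α-n} dy with μ > 0, u finite everywhere. If for every x ∈ ℝⁿ and every λ > 0 one has (λ/|y-x|)^{n-α} u(x + λ²(y-x)/|y-x|²) ≤ u(y) for all |y-x| ≥ λ, then u is constant — which contradicts the equation; hence no positive solution can satisfy the moving-sphere inequality for all centers x and all radii λ. -/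
open MeasureTheory Filter

theorem no_solution_with_full_moving_sphere (n : ℕ) (hn : 1 ≤ n) (α μ : ℝ)
    (hα0 : 0 < α) (hαn : α < n) (hμ : 0 < μ)
    (u : EuclideanSpace ℝ (Fin n) → ℝ) (hu : Continuous u) (hupos : ∀ x, 0 < u x)
    (heq : ∀ x, u x = ∫ y, u y ^ μ * ‖x - y‖ ^ (α - (n : ℝ)))
    (hms : ∀ x : EuclideanSpace ℝ (Fin n), ∀ lam : ℝ, 0 < lam →
      ∀ y, lam ≤ ‖y - x‖ →
        (lam / ‖y - x‖) ^ ((n : ℝ) - α) *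
          u (x + (lam ^ 2 / ‖y - x‖ ^ 2) • (y - x)) ≤ u y) :
    False := by
  -- Step 1 : u is monotone-comparable between any two points, hence constant
  have mono : ∀ a b : EuclideanSpace ℝ (Fin n), u a ≤ u b := by
    intro a b
    rcases eq_or_ne b a with rfl | hne
    · exact le_rfl
    set v := b - a with hv
    have hd : 0 < ‖v‖ := by simpa [hv, sub_eq_zero] using hne
    set d := ‖v‖ with hdd
    have key : ∀ t : ℝ, 0 < t →
        Real.sqrt (t / (d + t)) ^ ((n : ℝ) - α) * u a ≤ u b := by
      intro t ht
      have hdt : 0 < d + t := by linarith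
      set x : EuclideanSpace ℝ (Fin n) := a - (t / d) • v with hx
      have hbx : b - x = ((d + t) / d) • v := by
        have hc : (d + t) / d = 1 + t / d := by field_simp
        rw [hx, hc, hv]
        module
      have hnbx : ‖b - x‖ = d + t := by
        rw [hbx, norm_smul, Real.norm_eq_abs, abs_of_pos (by positivity)]
        field_simp
        exact hdd.symm
      set lam : ℝ := Real.sqrt (t * (d + t)) with hlamdef
      have hlam : 0 < lam := Real.sqrt_pos.2 (by positivity)
      have hsq : lam ^ 2 = t * (d + t) := Real.sq_sqrt (by positivity)
      have hlamle : lam ≤ ‖b - x‖ := by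
        rw [hnbx]
        have : lam ≤ Real.sqrt ((d + t) ^ 2) :=
          Real.sqrt_le_sqrt (by nlinarith)
        simpa [Real.sqrt_sq hdt.le] using this
      have hpoint : x + (lam ^ 2 / ‖b - x‖ ^ 2) • (b - x) = a := by
        have hc : t * (d + t) / (d + t) ^ 2 * ((d + t) / d) = t / d := by
          field_simp
        rw [hnbx, hsq, hbx, smul_smul, hc, hx]
        module
      have hratio : lam / ‖b - x‖ = Real.sqrt (t / (d + t)) := by
        rw [hnbx, hlamdef, Real.sqrt_div ht.le, Real.sqrt_mul ht.le]
        nth_rewrite 2 [← Real.mul_self_sqrt hdt.le]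
        rw [mul_div_mul_right _ _ (by positivity : Real.sqrt (d + t) ≠ 0)]
      have := hms x lam hlam b hlamle
      rwa [hpoint, hratio] at this
    -- take the limit t → ∞
    have h0 : Tendsto (fun t : ℝ => d / t) atTop (nhds 0) :=
      Tendsto.div_atTop tendsto_const_nhds tendsto_id
    have hden : Tendsto (fun t : ℝ => d / t + 1) atTop (nhds (0 + 1)) :=
      h0.add tendsto_const_nhds
    have h1 : Tendsto (fun t : ℝ => (d / t + 1)⁻¹) atTop (nhds 1) := by
      simpa using hden.inv₀ (by norm_num)
    have h2 : Tendsto (fun t : ℝ => t / (d + t)) atTop (nhds 1) := by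
      apply h1.congr'
      filter_upwards [eventually_gt_atTop 0] with t ht
      rw [eq_comm]
      have hdt : d + t ≠ 0 := by positivity
      field_simp
    have h3 : Tendsto (fun t : ℝ => Real.sqrt (t / (d + t))) atTop (nhds 1) := by
      have := (Real.continuous_sqrt.continuousAt (x := (1:ℝ))).tendsto.comp h2
      simpa [Function.comp_def] using this
    have h4 : Tendsto (fun t : ℝ => Real.sqrt (t / (d + t)) ^ ((n : ℝ) - α))
        atTop (nhds 1) := by
      have hc : ContinuousAt (fun s : ℝ => s ^ ((n : ℝ) - α)) 1 :=
        Real.continuousAt_rpow_const 1 _ (Or.inl one_ne_zero)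
      have := hc.tendsto.comp h3
      simpa [Function.comp_def] using this
    have h5 : Tendsto (fun t : ℝ => Real.sqrt (t / (d + t)) ^ ((n : ℝ) - α) * u a)
        atTop (nhds (u a)) := by
      simpa using h4.mul_const (u a)
    refine le_of_tendsto h5 ?_
    filter_upwards [eventually_gt_atTop 0] with t ht using key t ht
  have hconst : ∀ x, u x = u 0 := fun x => le_antisymm (mono x 0) (mono 0 x)
  -- Step 2 : the scaling argument shows ∫ ‖y‖ ^ (α - n) = 0
  set J : ℝ := ∫ y : EuclideanSpace ℝ (Fin n), ‖y‖ ^ (α - (n : ℝ)) with hJ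
  have hscale := Measure.integral_comp_smul_of_nonneg (volume)
    (fun y : EuclideanSpace ℝ (Fin n) => ‖y‖ ^ (α - (n : ℝ))) (2 : ℝ)
    (hR := by norm_num)
  have hfr : Module.finrank ℝ (EuclideanSpace ℝ (Fin n)) = n := by
    simp [finrank_euclideanSpace]
  have hlhs : (∫ y : EuclideanSpace ℝ (Fin n), ‖(2:ℝ) • y‖ ^ (α - (n : ℝ)))
      = (2:ℝ) ^ (α - (n : ℝ)) * J := by
    rw [hJ, ← integral_const_mul]
    congr 1
    ext y
    rw [norm_smul, Real.norm_eq_abs, abs_of_pos (by norm_num : (0:ℝ) < 2),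
      Real.mul_rpow (by norm_num) (norm_nonneg y)]
  have hscale' : (2:ℝ) ^ (α - (n : ℝ)) * J = ((2:ℝ) ^ n)⁻¹ * J := by
    rw [hfr] at hscale
    rw [← hlhs, hscale, smul_eq_mul, ← hJ]
  have hne : (2:ℝ) ^ (α - (n : ℝ)) ≠ ((2:ℝ) ^ n)⁻¹ := by
    have h1 : ((2:ℝ) ^ n)⁻¹ = (2:ℝ) ^ (-(n : ℝ)) := by
      rw [← Real.rpow_natCast 2 n, ← Real.rpow_neg (by norm_num)]
    rw [h1]
    have hlt : (2:ℝ) ^ (-(n : ℝ)) < (2:ℝ) ^ (α - (n : ℝ)) := by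
      apply Real.rpow_lt_rpow_left_iff (by norm_num : (1:ℝ) < 2) |>.2
      linarith
    exact ne_of_gt hlt
  have hJ0 : J = 0 := by
    by_contra hJ0
    exact hne (mul_right_cancel₀ hJ0 hscale')
  -- Step 3 : plug into the equation
  have hint : (∫ y, u y ^ μ * ‖(0 : EuclideanSpace ℝ (Fin n)) - y‖ ^ (α - (n : ℝ)))
      = (u 0) ^ μ * J := by
    rw [hJ, ← integral_const_mul]
    congr 1
    ext y
    rw [hconst y, zero_sub, norm_neg]
  have : u 0 = (u 0) ^ μ * J := by rw [← hint]; exact heq 0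
  rw [hJ0, mul_zero] at this
  exact absurd this (ne_of_gt (hupos 0))
end
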